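/- arXiv:2104.11997 — 5 statements merged into one kernel-verified Lean document; each statement's English description precedes it below -/
import Mathlib

section
/- Let G be a finite p-group (p prime). The number of maximal abelian subgroups of G (i.e., subgroups maximal with respect to inclusion among abelian subgroups of G) is congruent to 1 modulo p. -/
open Subgroup

private lemma sup_zpowers_isCommutative {G : Type*} [Group G] {A : Subgroup G} {x : G}
    (hA : IsMulCommutative A) (hx : x ∈ centralizer (A : Set G)) :
    IsMulCommutative ↥(A ⊔ zpowers x) := by
  rw [← le_centralizer_iff_isMulCommutative]
  refine sup_le ?_ ?_
  · rw [le_centralizer_iff]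
    exact sup_le (haveI := hA; le_centralizer A) (zpowers_le.2 hx)
  · rw [le_centralizer_iff]
    refine sup_le ?_ ?_
    · rw [le_centralizer_iff]; exact zpowers_le.2 hx
    · exact le_centralizer (zpowers x)

private lemma center_le_of_maximal {G : Type*} [Group G] {A : Subgroup G}
    (h : Maximal (fun H : Subgroup G => IsMulCommutative H) A) : center G ≤ A := by
  intro z hz
  have hzc : z ∈ centralizer (A : Set G) := center_le_centralizer (A : Set G) hz
  have hcomm := sup_zpowers_isCommutative h.1 hzc
  have hle : A ⊔ zpowers z ≤ A := h.2 hcomm le_sup_left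
  exact hle (le_sup_right (α := Subgroup G) (mem_zpowers z))

private def equivCentralizer {G : Type*} [Group G] (g : G) :
    {A : Subgroup G // Maximal (fun H : Subgroup G => IsMulCommutative H) A ∧ g ∈ A} ≃
    {B : Subgroup ↥(centralizer ({g} : Set G)) // Maximal (fun H : Subgroup ↥(centralizer ({g} : Set G)) => IsMulCommutative H) B} := by
  set H := centralizer ({g} : Set G) with hH
  have hgH : g ∈ H := mem_centralizer_singleton_iff.2 rfl
  have hle_of : ∀ (A : Subgroup G), IsMulCommutative A → g ∈ A → A ≤ H := by
    intro A hA hgA a ha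
    haveI := hA
    exact mem_centralizer_singleton_iff.2 (mul_comm_of_mem_isMulCommutative (H := A) ha hgA)
  refine
    { toFun := fun x => ⟨(x : Subgroup G).subgroupOf H, ?_, ?_⟩
      invFun := fun y => ⟨map H.subtype (y : Subgroup H), ⟨?_, ?_⟩, ?_⟩
      left_inv := ?_
      right_inv := ?_ }
  · haveI := x.2.1.1
    exact inferInstance
  · -- maximality of subgroupOf
    intro B' hB' hle b hb
    obtain ⟨A, hA, hgA⟩ := x
    have hAH : A ≤ H := hle_of A hA.1 hgA
    have h1 : A ≤ map H.subtype B' := by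
      intro a ha
      exact ⟨⟨a, hAH ha⟩, hle (mem_subgroupOf.2 ha), rfl⟩
    have h2 : IsMulCommutative (map H.subtype B') := by
      haveI := hB'; exact inferInstance
    have h3 : map H.subtype B' ≤ A := hA.2 h2 h1
    exact mem_subgroupOf.2 (h3 ⟨b, hb, rfl⟩)
  · haveI := y.2.1
    exact inferInstance
  · -- maximality of map
    intro B' hB' hle b hb
    obtain ⟨B, hB⟩ := y
    have hgB : (⟨g, hgH⟩ : H) ∈ B :=
      center_le_of_maximal hB
        (mem_center_iff.2 fun h => Subtype.ext (mem_centralizer_singleton_iff.1 h.2))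
    have hgB' : g ∈ B' := hle ⟨_, hgB, rfl⟩
    have hB'H : B' ≤ H := hle_of B' hB' hgB'
    have h1 : B ≤ B'.subgroupOf H := fun c hc => mem_subgroupOf.2 (hle ⟨c, hc, rfl⟩)
    have h2 : IsMulCommutative (B'.subgroupOf H) := by
      haveI := hB'; exact inferInstance
    have h3 : B'.subgroupOf H ≤ B := hB.2 h2 h1
    exact ⟨⟨b, hB'H hb⟩, h3 (mem_subgroupOf.2 hb), rfl⟩
  · -- g ∈ map
    obtain ⟨B, hB⟩ := y
    have hgB : (⟨g, hgH⟩ : H) ∈ B :=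
      center_le_of_maximal hB
        (mem_center_iff.2 fun h => Subtype.ext (mem_centralizer_singleton_iff.1 h.2))
    exact ⟨_, hgB, rfl⟩
  · rintro ⟨A, hA, hgA⟩
    have hAH : A ≤ H := hle_of A hA.1 hgA
    refine Subtype.ext ?_
    show map H.subtype (A.subgroupOf H) = A
    rw [subgroupOf_map_subtype]
    exact inf_eq_left.2 hAH
  · rintro ⟨B, hB⟩
    refine Subtype.ext ?_
    show (map H.subtype B).subgroupOf H = B
    exact comap_map_eq_self_of_injective H.subtype_injective B


universe u

private theorem aux_count (p : ℕ) (hp : p.Prime) :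
    ∀ (n : ℕ) (G : Type u) [Group G] [Finite G], Nat.card G ≤ n → IsPGroup p G →
      ((Nat.card {A : Subgroup G // Maximal (fun H : Subgroup G => IsMulCommutative H) A} : ℕ) : ZMod p) = 1 := by
  intro n
  induction n with
  | zero =>
    intro G _ _ hle _
    have := Nat.card_pos (α := G)
    omega
  | succ n ih =>
    intro G _ _ hle hpG
    haveI : Fact p.Prime := ⟨hp⟩
    classical
    by_cases hab : ∀ a b : G, a * b = b * a
    · -- abelian case: the unique maximal commutative subgroup is ⊤
      have htopc : IsMulCommutative (⊤ : Subgroup G) := ⟨⟨fun a b => Subtype.ext (hab a b)⟩⟩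
      haveI : Unique {A : Subgroup G // Maximal (fun H : Subgroup G => IsMulCommutative H) A} :=
        { default := ⟨⊤, htopc, fun B _ _ => le_top⟩
          uniq := fun A => Subtype.ext (top_le_iff.1 (A.2.2 htopc le_top)) }
      rw [Nat.card_unique, Nat.cast_one]
    · push_neg at hab
      obtain ⟨u, v, huv⟩ := hab
      have hu : u ∉ center G := fun h => huv ((mem_center_iff.1 h v).symm)
      set Z := center G with hZ
      let π := QuotientGroup.mk' Z
      set Q := G ⧸ Z with hQdef
      haveI : Fintype Q := Fintype.ofFinite _
      have hQp : IsPGroup p Q := hpG.to_quotient Z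
      haveI hQnt : Nontrivial Q :=
        ⟨π u, 1, fun h => hu ((QuotientGroup.eq_one_iff u).1 h)⟩
      have hQ0 : ((Fintype.card Q : ℕ) : ZMod p) = 0 := by
        obtain ⟨k, hk⟩ := IsPGroup.iff_card.1 hQp
        rw [Nat.card_eq_fintype_card] at hk
        rw [ZMod.natCast_eq_zero_iff, hk]
        refine dvd_pow_self p ?_
        rintro rfl
        rw [pow_zero] at hk
        exact (Fintype.one_lt_card).ne' hk
      -- every maximal commutative subgroup has a noncentral element
      have hnc : ∀ A : Subgroup G, Maximal (fun H : Subgroup G => IsMulCommutative H) A → ∃ a ∈ A, a ∉ Z := by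
        intro A hA
        by_contra h
        push_neg at h
        have hAle : A ≤ Z := h
        have hu' : u ∈ centralizer (A : Set G) := by
          intro a ha
          exact (mem_center_iff.1 (hAle ha) u).symm
        have hcomm := sup_zpowers_isCommutative hA.1 hu'
        have hle' : A ⊔ zpowers u ≤ A := hA.2 hcomm le_sup_left
        exact hu (hAle (hle' (le_sup_right (α := Subgroup G) (mem_zpowers u))))
      -- the double-counted type
      let P : Q → Subgroup G → Prop := fun c A => Maximal (fun H : Subgroup G => IsMulCommutative H) A ∧ c ∈ A.map π
      let F : Q → ℕ := fun c => Nat.card {A : Subgroup G // P c A}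
      let T := {x : Q × Subgroup G // P x.1 x.2}
      let S := {A : Subgroup G // Maximal (fun H : Subgroup G => IsMulCommutative H) A}
      haveI : ∀ c : Q, Fintype {A : Subgroup G // P c A} := fun c => Fintype.ofFinite _
      haveI : Fintype T := Fintype.ofFinite _
      haveI : Fintype S := Fintype.ofFinite _
      haveI : ∀ A : S, Fintype ↥((A : Subgroup G).map π) := fun A => Fintype.ofFinite _
      have e1 : T ≃ Σ c : Q, {A : Subgroup G // P c A} :=
        Equiv.subtypeProdEquivSigmaSubtype P
      have e2 : T ≃ Σ A : S, ↥((A : Subgroup G).map π) :=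
        { toFun := fun x => ⟨⟨x.1.2, x.2.1⟩, ⟨x.1.1, x.2.2⟩⟩
          invFun := fun y => ⟨(y.2.1, y.1.1), ⟨y.1.2, y.2.2⟩⟩
          left_inv := fun x => rfl
          right_inv := fun y => rfl }
      -- first count
      have hcount1 : Nat.card T = ∑ c : Q, F c := by
        rw [Nat.card_congr e1, Nat.card_eq_fintype_card, Fintype.card_sigma]
        exact Finset.sum_congr rfl fun c _ => (Nat.card_eq_fintype_card).symm
      -- second count: each fiber over A has size divisible by p
      have hcount2 : ((Nat.card T : ℕ) : ZMod p) = 0 := by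
        rw [Nat.card_congr e2, Nat.card_eq_fintype_card, Fintype.card_sigma, Nat.cast_sum]
        refine Finset.sum_eq_zero fun A _ => ?_
        rw [← Nat.card_eq_fintype_card, ZMod.natCast_eq_zero_iff]
        obtain ⟨k, hk⟩ := IsPGroup.iff_card.1 (hQp.to_subgroup ((A : Subgroup G).map π))
        rw [hk]
        refine dvd_pow_self p ?_
        rintro rfl
        rw [pow_zero] at hk
        obtain ⟨a, haA, hanZ⟩ := hnc A A.2
        have hnt : Nontrivial ↥((A : Subgroup G).map π) :=
          (Subgroup.nontrivial_iff_exists_ne_one _).2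
            ⟨π a, ⟨a, haA, rfl⟩, fun h => hanZ ((QuotientGroup.eq_one_iff a).1 h)⟩
        exact (Finite.one_lt_card_iff_nontrivial.2 hnt).ne' hk
      -- fiber over 1 is all of S
      have hF1 : F 1 = Nat.card S := by
        refine Nat.card_congr (Equiv.subtypeEquivRight fun A => ?_)
        exact ⟨fun h => h.1, fun h => ⟨h, one_mem _⟩⟩
      -- fiber over c ≠ 1 has size ≡ 1
      have hFc : ∀ c : Q, c ≠ 1 → ((F c : ℕ) : ZMod p) = 1 := by
        intro c hc
        set g := c.out with hg
        have hgc : (g : Q) = c := Quotient.out_eq' c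
        have hgnZ : g ∉ Z := fun h => hc (by rw [← hgc]; exact (QuotientGroup.eq_one_iff g).2 h)
        have hfe : {A : Subgroup G // P c A} ≃ {A : Subgroup G // Maximal (fun H : Subgroup G => IsMulCommutative H) A ∧ g ∈ A} := by
          refine Equiv.subtypeEquivRight fun A => and_congr_right fun hA => ?_
          constructor
          · rintro ⟨a, haA, hac⟩
            have : (a : Q) = (g : Q) := by rw [hgc]; exact hac
            have h2 : a⁻¹ * g ∈ Z := QuotientGroup.eq.1 this
            have h3 : a⁻¹ * g ∈ A := center_le_of_maximal hA h2
            simpa using mul_mem haA h3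
          · intro hgA
            exact ⟨g, hgA, hgc⟩
        have hH : Nat.card ↥(centralizer ({g} : Set G)) ≤ n := by
          have hne : centralizer ({g} : Set G) ≠ ⊤ := by
            intro htop
            exact hgnZ (centralizer_eq_top_iff_subset.1 htop rfl)
          have hdvd : Nat.card ↥(centralizer ({g} : Set G)) ∣ Nat.card G :=
            Subgroup.card_subgroup_dvd_card _
          have hlt : Nat.card ↥(centralizer ({g} : Set G)) < Nat.card G := by
            refine lt_of_le_of_ne (Nat.le_of_dvd Nat.card_pos hdvd) fun h => hne ?_
            exact Subgroup.eq_top_of_card_eq _ h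
          omega
        calc ((F c : ℕ) : ZMod p)
            = ((Nat.card {B : Subgroup ↥(centralizer ({g} : Set G)) //
                Maximal (fun H : Subgroup ↥(centralizer ({g} : Set G)) => IsMulCommutative H) B} : ℕ) : ZMod p) := by
              rw [show F c = _ from Nat.card_congr (hfe.trans (equivCentralizer g))]
          _ = 1 := ih _ hH (hpG.to_subgroup _)
      -- assemble
      have hsum : (0 : ZMod p) = ∑ c : Q, ((F c : ℕ) : ZMod p) := by
        rw [← Nat.cast_sum, ← hcount1, hcount2]
      rw [Fintype.sum_eq_add_sum_compl 1 (fun c => ((F c : ℕ) : ZMod p))] at hsum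
      have hrest : ∑ c ∈ ({1}ᶜ : Finset Q), ((F c : ℕ) : ZMod p)
          = (({1}ᶜ : Finset Q).card : ZMod p) := by
        rw [Finset.sum_congr rfl fun c hcm => hFc c (by
          simpa using (Finset.mem_compl.1 hcm))]
        rw [Finset.sum_const, nsmul_eq_mul, mul_one]
      have hcompl : (({1}ᶜ : Finset Q).card : ZMod p) = -1 := by
        have h1 : ({1}ᶜ : Finset Q).card + 1 = Fintype.card Q := by
          rw [Finset.card_compl, Finset.card_singleton]
          have := Fintype.card_pos (α := Q)
          omega
        have := congrArg (fun m : ℕ => ((m : ℕ) : ZMod p)) h1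
        push_cast at this
        rw [hQ0] at this
        linear_combination this
      rw [hrest, hcompl, hF1] at hsum
      have : ((Nat.card S : ℕ) : ZMod p) = 1 := by linear_combination -hsum
      exact this


theorem maximal_abelian_count_mod_p {p : ℕ} (hp : p.Prime) {G : Type*} [Group G]
    [Finite G] (hG : IsPGroup p G) :
    Nat.card {A : Subgroup G // Maximal (fun H : Subgroup G => IsMulCommutative H) A} ≡ 1 [MOD p] := by
  have h := aux_count p hp (Nat.card G) G le_rfl hG
  have := (ZMod.natCast_eq_natCast_iff _ _ _).1 (h.trans (Nat.cast_one).symm)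
  exact this
end

section
/- Let G be a finite p-group and let S ≤ T be subgroups of G. If S is normal in T and T/S is elementary abelian of rank k (i.e., T/S ≅ (Z/pZ)^k), then the Möbius function of the subgroup lattice of G satisfies μ(S,T) = (-1)^k · p^{k(k-1)/2}; otherwise μ(S,T) = 0. -/
/-- The defining property of the Möbius function of the subgroup lattice of `G`:
`μ S S = 1` and `∑_{S ⊆ U ⊆ T} μ S U = 0` whenever `S ⊊ T`. -/
def IsSubgroupMobius {G : Type*} [Group G] (μ : Subgroup G → Subgroup G → ℤ) : Prop :=
  (∀ S : Subgroup G, μ S S = 1) ∧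
  ∀ S T : Subgroup G, S < T → ∑ᶠ U ∈ {U : Subgroup G | S ≤ U ∧ U ≤ T}, μ S U = 0

open Subgroup Function

section Defs
variable {G : Type*} [Group G]

/-- `T` normalizes `S` and the (would-be) quotient is abelian of exponent dividing `p`. -/
def EAQ (p : ℕ) (S T : Subgroup G) : Prop :=
  T ≤ (normalizer S) ∧ (∀ x ∈ T, x ^ p ∈ S) ∧
    ∀ x ∈ T, ∀ y ∈ T, x * y * x⁻¹ * y⁻¹ ∈ S

open scoped Classical in
noncomputable def mobW (p : ℕ) (S T : Subgroup G) : ℤ :=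
  if EAQ p S T then
    (-1) ^ ((S.relIndex T).factorization p) *
      (p : ℤ) ^ (((S.relIndex T).factorization p) * (((S.relIndex T).factorization p) - 1) / 2)
  else 0

lemma mobW_of_EAQ {p : ℕ} {S T : Subgroup G} (h : EAQ p S T) :
    mobW p S T = (-1) ^ ((S.relIndex T).factorization p) *
      (p : ℤ) ^ (((S.relIndex T).factorization p) * (((S.relIndex T).factorization p) - 1) / 2) :=
  if_pos h

lemma mobW_of_not_EAQ {p : ℕ} {S T : Subgroup G} (h : ¬ EAQ p S T) : mobW p S T = 0 := if_neg h

lemma EAQ.self (p : ℕ) (S : Subgroup G) : EAQ p S S :=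
  ⟨le_normalizer, fun x hx => S.pow_mem hx p, fun x hx y hy => by
    exact S.mul_mem (S.mul_mem (S.mul_mem hx hy) (S.inv_mem hx)) (S.inv_mem hy)⟩

lemma mobW_self (p : ℕ) (S : Subgroup G) : mobW p S S = 1 := by
  rw [mobW_of_EAQ (EAQ.self p S), relIndex_self]
  simp

lemma EAQ.mono_right {p : ℕ} {S T U : Subgroup G} (h : EAQ p S T) (hUT : U ≤ T) : EAQ p S U :=
  ⟨hUT.trans h.1, fun x hx => h.2.1 x (hUT hx), fun x hx y hy => h.2.2 x (hUT hx) y (hUT hy)⟩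

/-- If `T` normalizes `S`, then `S ∩ T` is normal in `T`. -/
lemma normal_subgroupOf_of_le_normalizer {S T : Subgroup G} (h : T ≤ (normalizer S)) :
    (S.subgroupOf T).Normal := by
  constructor
  intro n hn g
  have hg := mem_normalizer_iff.1 (h g.2)
  simpa [Subgroup.mem_subgroupOf] using (hg (n : G)).1 hn

end Defs

open Subgroup Function

lemma mem_normalizer_of_subgroupOf {G : Type*} [Group G] {S T : Subgroup G} (hST : S ≤ T)
    {x : ↥T} (hx : x ∈ (normalizer (S.subgroupOf T))) : (x : G) ∈ (normalizer S) := by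
  rw [mem_normalizer_iff]
  have h := mem_normalizer_iff.1 hx
  intro h'
  constructor
  · intro hh
    have := (h ⟨h', hST hh⟩).1 (by simpa [mem_subgroupOf] using hh)
    simpa [mem_subgroupOf] using this
  · intro hh
    have hmem : (x : G) * h' * (x : G)⁻¹ ∈ T := hST hh
    have h'T : h' ∈ T := by
      have : (x : G)⁻¹ * ((x : G) * h' * (x : G)⁻¹) * (x : G) ∈ T :=
        T.mul_mem (T.mul_mem (T.inv_mem x.2) hmem) x.2
      simpa [mul_assoc] using this
    have := (h ⟨h', h'T⟩).2 (by simpa [mem_subgroupOf] using hh)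
    simpa [mem_subgroupOf] using this

lemma exists_z {p : ℕ} (hp : p.Prime) {G : Type*} [Group G] [Finite G] (hG : IsPGroup p G)
    {S T : Subgroup G} (hST : S < T) :
    ∃ z : G, z ∈ T ∧ z ∈ (normalizer S) ∧ z ∉ S ∧ z ^ p ∈ S ∧
      ∀ x, x ∈ T → x ∈ (normalizer S) → z * x * z⁻¹ * x⁻¹ ∈ S := by
  haveI : Fact p.Prime := ⟨hp⟩
  set S' := S.subgroupOf T with hS'
  have hpT : IsPGroup p T := hG.to_subgroup T
  haveI := hpT.isNilpotent
  have hNC := normalizerCondition_of_isNilpotent (G := ↥T)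
  have hS'top : S' < ⊤ := by
    rcases SetLike.exists_of_lt hST with ⟨t, htT, htS⟩
    refine lt_of_le_of_ne le_top fun h => htS ?_
    have : (⟨t, htT⟩ : ↥T) ∈ S' := h ▸ mem_top _
    simpa [hS', mem_subgroupOf] using this
  have hlt : S' < (normalizer S') := hNC S' hS'top
  set N := (normalizer (S' : Set ↥T)) with hN
  haveI hnormal : (S'.subgroupOf N).Normal := Subgroup.normal_in_normalizer
  set Q := ↥N ⧸ (S'.subgroupOf N) with hQdef
  have hQ : IsPGroup p Q := ((hpT.to_subgroup N).to_quotient _)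
  haveI : Nontrivial Q := by
    rcases SetLike.exists_of_lt hlt with ⟨n, hnN, hnS⟩
    refine ⟨QuotientGroup.mk (⟨n, hnN⟩ : ↥N), 1, ?_⟩
    rw [ne_eq, QuotientGroup.eq_one_iff]
    simpa [mem_subgroupOf] using hnS
  haveI : Nontrivial (Subgroup.center Q) := hQ.center_nontrivial
  have hdvd : p ∣ Nat.card (Subgroup.center Q) := by
    obtain ⟨n, hn0, hn⟩ := (hQ.to_subgroup (Subgroup.center Q)).nontrivial_iff_card.mp inferInstance
    exact hn ▸ dvd_pow_self _ hn0.ne'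
  obtain ⟨g, hg⟩ := exists_prime_orderOf_dvd_card' (G := Subgroup.center Q) p hdvd
  obtain ⟨n', hn'⟩ := QuotientGroup.mk'_surjective (S'.subgroupOf N) (g : Q)
  set z : G := ((n' : ↥T) : G) with hz
  have hzT : z ∈ T := (n' : ↥T).2
  have hn'N : (n' : ↥T) ∈ N := n'.2
  have hzNorm : z ∈ (normalizer S) := mem_normalizer_of_subgroupOf hST.le (hN ▸ hn'N)
  have hzS : z ∉ S := by
    intro hzS
    have : QuotientGroup.mk' (S'.subgroupOf N) n' = 1 := by
      rw [QuotientGroup.mk'_apply, QuotientGroup.eq_one_iff]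
      simpa [mem_subgroupOf, hS'] using hzS
    rw [hn'] at this
    have hg1 : g = 1 := Subtype.ext this
    rw [hg1, orderOf_one] at hg
    exact hp.one_lt.ne' hg.symm
  have hzp : z ^ p ∈ S := by
    have : (QuotientGroup.mk' (S'.subgroupOf N) n') ^ p = 1 := by
      rw [hn']
      have : g ^ p = 1 := by rw [← hg]; exact pow_orderOf_eq_one g
      exact_mod_cast congrArg (Subtype.val) this
    rw [← map_pow, QuotientGroup.mk'_apply, QuotientGroup.eq_one_iff] at this
    simpa [mem_subgroupOf, hS'] using this
  -- centrality, auxiliary form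
  have aux : ∀ x, x ∈ T → x ∈ (normalizer S) → z⁻¹ * x⁻¹ * z * x ∈ S := by
    intro x hxT hxNorm
    have hx'N : (⟨x, hxT⟩ : ↥T) ∈ N := by
      rw [hN, mem_normalizer_iff]
      intro h
      simp only [mem_subgroupOf, hS']
      constructor
      · intro hh
        exact (mem_normalizer_iff.1 hxNorm (h : G)).1 hh
      · intro hh
        exact (mem_normalizer_iff.1 hxNorm (h : G)).2 hh
    set x'' : ↥N := ⟨⟨x, hxT⟩, hx'N⟩
    have hcomm : QuotientGroup.mk' (S'.subgroupOf N) (x'' * n') =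
        QuotientGroup.mk' (S'.subgroupOf N) (n' * x'') := by
      rw [map_mul, map_mul, hn']
      exact Subgroup.mem_center_iff.1 g.2 _
    rw [QuotientGroup.mk'_apply, QuotientGroup.mk'_apply, QuotientGroup.eq] at hcomm
    simp only [mem_subgroupOf] at hcomm
    simpa [z, mul_assoc, mul_inv_rev, hS', mem_subgroupOf] using hcomm
  refine ⟨z, hzT, hzNorm, hzS, hzp, ?_⟩
  intro x hxT hxNorm
  have h1 : z⁻¹ * x * z * x⁻¹ ∈ S := by
    simpa using aux x⁻¹ (T.inv_mem hxT) ((normalizer (S : Set G)).inv_mem hxNorm)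
  have h2 : z * (z⁻¹ * x * z * x⁻¹) * z⁻¹ ∈ S := (mem_normalizer_iff.1 hzNorm _).1 h1
  have h3 : x * z * x⁻¹ * z⁻¹ ∈ S := by
    have : z * (z⁻¹ * x * z * x⁻¹) * z⁻¹ = x * z * x⁻¹ * z⁻¹ := by group
    rwa [this] at h2
  have := S.inv_mem h3
  simpa [mul_assoc] using this

open Subgroup Function

section Ext
variable {p : ℕ} {G : Type*} [Group G]

lemma conj_zpow_mem {U : Subgroup G} {z : G}
    (h1 : ∀ u ∈ U, z * u * z⁻¹ ∈ U) (h2 : ∀ u ∈ U, z⁻¹ * u * z ∈ U)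
    (i : ℤ) : ∀ u ∈ U, z ^ i * u * z ^ (-i) ∈ U := by
  induction i using Int.induction_on with
  | zero => simp
  | succ k ih =>
    intro u hu
    have h := h1 _ (ih u hu)
    have e : z * (z ^ (k : ℤ) * u * z ^ (-(k : ℤ))) * z⁻¹ =
        z ^ ((k : ℤ) + 1) * u * z ^ (-((k : ℤ) + 1)) := by group
    rwa [e] at h
  | pred k ih =>
    intro u hu
    have h := h2 _ (ih u hu)
    have e : z⁻¹ * (z ^ (-(k : ℤ)) * u * z ^ (-(-(k : ℤ)))) * z =
        z ^ (-(k : ℤ) - 1) * u * z ^ (-(-(k : ℤ) - 1)) := by group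
    rwa [e] at h

lemma mem_sup_closure_decomp {U : Subgroup G} {z : G}
    (h1 : ∀ u ∈ U, z * u * z⁻¹ ∈ U) (h2 : ∀ u ∈ U, z⁻¹ * u * z ∈ U)
    {x : G} (hx : x ∈ U ⊔ closure {z}) : ∃ u ∈ U, ∃ i : ℤ, x = u * z ^ i := by
  have hsup : U ⊔ closure {z} = closure ((U : Set G) ∪ {z}) := by
    rw [Subgroup.closure_union, Subgroup.closure_eq]
  rw [hsup] at hx
  induction hx using Subgroup.closure_induction with
  | mem w hw =>
    rcases hw with hw | hw
    · exact ⟨w, hw, 0, by simp⟩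
    · exact ⟨1, U.one_mem, 1, by simp [Set.mem_singleton_iff.1 hw]⟩
  | one => exact ⟨1, U.one_mem, 0, by simp⟩
  | mul a b ha hb iha ihb =>
    obtain ⟨u, hu, i, rfl⟩ := iha
    obtain ⟨v, hv, j, rfl⟩ := ihb
    refine ⟨u * (z ^ i * v * z ^ (-i)), U.mul_mem hu (conj_zpow_mem h1 h2 i v hv), i + j, ?_⟩
    rw [zpow_add]
    group
  | inv a ha iha =>
    obtain ⟨u, hu, i, rfl⟩ := iha
    refine ⟨z ^ (-i) * u⁻¹ * z ^ (-(-i)), conj_zpow_mem h1 h2 (-i) u⁻¹ (U.inv_mem hu), -i, ?_⟩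
    group

lemma normal_subgroupOf_of_le_normalizer' {S T : Subgroup G} (h : T ≤ (normalizer S)) :
    (S.subgroupOf T).Normal := by
  constructor
  intro n hn g
  have hg := mem_normalizer_iff.1 (h g.2)
  simpa [Subgroup.mem_subgroupOf] using (hg (n : G)).1 hn

lemma EAQ_extend (hp : p.Prime) [Finite G] {S U : Subgroup G} (hSU : S ≤ U)
    (hU : EAQ p S U)
    {z : G} (hzNorm : z ∈ (normalizer S)) (hzS : z ∉ S) (hzp : z ^ p ∈ S) (hzU : z ∉ U)
    (hzc : ∀ u ∈ U, z * u * z⁻¹ * u⁻¹ ∈ S) :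
    EAQ p S (U ⊔ closure {z}) ∧ S.relIndex (U ⊔ closure {z}) = S.relIndex U * p := by
  haveI : Fact p.Prime := ⟨hp⟩
  have h1 : ∀ u ∈ U, z * u * z⁻¹ ∈ U := by
    intro u hu
    have hs := hSU (hzc u hu)
    have e : z * u * z⁻¹ = (z * u * z⁻¹ * u⁻¹) * u := by group
    rw [e]; exact U.mul_mem hs hu
  -- u⁻¹ z⁻¹ u z ∈ S
  have dS : ∀ u ∈ U, u⁻¹ * z⁻¹ * u * z ∈ S := by
    intro u hu
    have c0 := hzc u hu
    have c1 : z⁻¹ * (z * u * z⁻¹ * u⁻¹) * (z⁻¹)⁻¹ ∈ S :=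
      (mem_normalizer_iff.1 ((normalizer (S : Set G)).inv_mem hzNorm) _).1 c0
    have c2 : (z⁻¹ * (z * u * z⁻¹ * u⁻¹) * (z⁻¹)⁻¹)⁻¹ ∈ S := S.inv_mem c1
    have c3 : u⁻¹ * (z⁻¹ * (z * u * z⁻¹ * u⁻¹) * (z⁻¹)⁻¹)⁻¹ * (u⁻¹)⁻¹ ∈ S :=
      (mem_normalizer_iff.1 ((normalizer (S : Set G)).inv_mem (hU.1 hu)) _).1 c2
    have e : u⁻¹ * (z⁻¹ * (z * u * z⁻¹ * u⁻¹) * (z⁻¹)⁻¹)⁻¹ * (u⁻¹)⁻¹ =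
        u⁻¹ * z⁻¹ * u * z := by group
    rwa [e] at c3
  have h2 : ∀ u ∈ U, z⁻¹ * u * z ∈ U := by
    intro u hu
    have hs := hSU (dS u hu)
    have e : z⁻¹ * u * z = u * (u⁻¹ * z⁻¹ * u * z) := by group
    rw [e]; exact U.mul_mem hu hs
  set U' := U ⊔ closure {z} with hU'def
  have hzU' : z ∈ U' := Subgroup.mem_sup_right (Subgroup.subset_closure (Set.mem_singleton z))
  have hUleU' : U ≤ U' := le_sup_left
  have hSU' : S ≤ U' := hSU.trans hUleU'
  have hNorm' : U' ≤ (normalizer S) :=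
    sup_le hU.1 ((Subgroup.closure_le _).2 (Set.singleton_subset_iff.2 hzNorm))
  haveI hSnormal : (S.subgroupOf U').Normal := normal_subgroupOf_of_le_normalizer' hNorm'
  set π := QuotientGroup.mk' (S.subgroupOf U') with hπdef
  have hπ1 : ∀ w : ↥U', π w = 1 ↔ (w : G) ∈ S := by
    intro w
    rw [hπdef, QuotientGroup.mk'_apply, QuotientGroup.eq_one_iff, mem_subgroupOf]
  have hπcomm : ∀ a b : ↥U', ((b : G))⁻¹ * ((a : G))⁻¹ * b * a ∈ S → π a * π b = π b * π a := by
    intro a b h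
    rw [hπdef, QuotientGroup.mk'_apply, QuotientGroup.mk'_apply, ← QuotientGroup.mk_mul,
      ← QuotientGroup.mk_mul, QuotientGroup.eq]
    simp only [mem_subgroupOf]
    simpa [mul_assoc] using h
  set zU' : ↥U' := ⟨z, hzU'⟩ with hzU'def
  have hczU : ∀ (u : G) (hu : u ∈ U), Commute (π ⟨u, hUleU' hu⟩) (π zU') := by
    intro u hu
    refine hπcomm _ _ ?_
    have := S.inv_mem (dS u hu)
    have e : (u⁻¹ * z⁻¹ * u * z)⁻¹ = z⁻¹ * u⁻¹ * z * u := by group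
    rw [e] at this
    simpa [mul_assoc] using this
  have hcUU : ∀ (u v : G) (hu : u ∈ U) (hv : v ∈ U),
      Commute (π ⟨u, hUleU' hu⟩) (π ⟨v, hUleU' hv⟩) := by
    intro u v hu hv
    refine hπcomm _ _ ?_
    have := hU.2.2 v⁻¹ (U.inv_mem hv) u⁻¹ (U.inv_mem hu)
    simpa [mul_assoc] using this
  have hdec : ∀ w : ↥U', ∃ (u : G) (hu : u ∈ U) (i : ℤ), w = ⟨u, hUleU' hu⟩ * zU' ^ i := by
    intro w
    obtain ⟨u, hu, i, hw⟩ := mem_sup_closure_decomp h1 h2 w.2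
    exact ⟨u, hu, i, by ext; simp [hw, hzU'def]⟩
  have hπz_pow : (π zU') ^ p = 1 := by
    rw [← map_pow, hπ1]
    simpa using hzp
  have hπdecQ : ∀ a : ↥U' ⧸ S.subgroupOf U',
      ∃ (u : G) (hu : u ∈ U) (i : ℤ), a = π ⟨u, hUleU' hu⟩ * (π zU') ^ i := by
    intro a
    obtain ⟨w, rfl⟩ := QuotientGroup.mk'_surjective (S.subgroupOf U') a
    obtain ⟨u, hu, i, hw⟩ := hdec w
    exact ⟨u, hu, i, by rw [hπdef, hw, map_mul, map_zpow]⟩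
  have hQcomm : ∀ a b : ↥U' ⧸ S.subgroupOf U', Commute a b := by
    intro a b
    obtain ⟨u, hu, i, rfl⟩ := hπdecQ a
    obtain ⟨v, hv, j, rfl⟩ := hπdecQ b
    have k1 : Commute (π ⟨u, hUleU' hu⟩) (π ⟨v, hUleU' hv⟩) := hcUU u v hu hv
    have k2 : Commute (π ⟨u, hUleU' hu⟩) ((π zU') ^ j) := (hczU u hu).zpow_right j
    have k3 : Commute ((π zU') ^ i) (π ⟨v, hUleU' hv⟩) := ((hczU v hv).symm).zpow_left i
    have k4 : Commute ((π zU') ^ i) ((π zU') ^ j) := Commute.zpow_zpow (Commute.refl _) i j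
    exact (k1.mul_right k2).mul_left (k3.mul_right k4)
  constructor
  · refine ⟨hNorm', ?_, ?_⟩
    · intro x hx
      set w : ↥U' := ⟨x, hx⟩ with hwdef
      have hw : ((w ^ p : ↥U') : G) ∈ S := by
        rw [← hπ1, map_pow]
        obtain ⟨u, hu, i, hw⟩ := hdec w
        rw [hw, map_mul, map_zpow]
        rw [Commute.mul_pow ((hczU u hu).zpow_right i)]
        have e1 : (π ⟨u, hUleU' hu⟩) ^ p = 1 := by
          rw [← map_pow, hπ1]
          simpa using hU.2.1 u hu
        have e2 : ((π zU') ^ i) ^ p = 1 := by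
          rw [← zpow_natCast, ← zpow_mul, mul_comm, zpow_mul, zpow_natCast, hπz_pow, one_zpow]
        rw [e1, e2, one_mul]
      simpa using hw
    · intro x hx y hy
      set w1 : ↥U' := ⟨x, hx⟩
      set w2 : ↥U' := ⟨y, hy⟩
      have hw : ((w1 * w2 * w1⁻¹ * w2⁻¹ : ↥U') : G) ∈ S := by
        rw [← hπ1]
        simp only [map_mul, map_inv]
        have := commutatorElement_eq_one_iff_commute.2 (hQcomm (π w1) (π w2))
        rwa [commutatorElement_def] at this
      simpa [mul_assoc] using hw
  · -- index computation
    have hU'normU : U' ≤ (normalizer U) := by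
      refine sup_le le_normalizer ((Subgroup.closure_le _).2 (Set.singleton_subset_iff.2 ?_))
      rw [SetLike.mem_coe, mem_normalizer_iff]
      intro h
      constructor
      · exact fun hh => h1 h hh
      · intro hh
        have := h2 _ hh
        have e : z⁻¹ * (z * h * z⁻¹) * z = h := by group
        rwa [e] at this
    haveI : (U.subgroupOf U').Normal := normal_subgroupOf_of_le_normalizer' hU'normU
    set πU := QuotientGroup.mk' (U.subgroupOf U') with hπU
    set ζ := πU zU' with hζ
    have hζp : ζ ^ p = 1 := by
      rw [hζ, ← map_pow, hπU, QuotientGroup.mk'_apply, QuotientGroup.eq_one_iff, mem_subgroupOf]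
      simpa using hSU hzp
    have hζ1 : ζ ≠ 1 := by
      rw [hζ, hπU, QuotientGroup.mk'_apply, ne_eq, QuotientGroup.eq_one_iff, mem_subgroupOf]
      simpa using hzU
    have horder : orderOf ζ = p := orderOf_eq_prime hζp hζ1
    have htop : Subgroup.zpowers ζ = ⊤ := by
      rw [eq_top_iff]
      intro a _
      obtain ⟨w, rfl⟩ := QuotientGroup.mk'_surjective (U.subgroupOf U') a
      obtain ⟨u, hu, i, hw⟩ := hdec w
      have e1 : πU ⟨u, hUleU' hu⟩ = 1 := by
        rw [hπU, QuotientGroup.mk'_apply, QuotientGroup.eq_one_iff, mem_subgroupOf]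
        simpa using hu
      have : πU w = ζ ^ i := by
        rw [hw, map_mul, map_zpow, e1, one_mul, hζ]
      rw [this]
      exact zpow_mem (Subgroup.mem_zpowers ζ) i
    have hcard : Nat.card (↥U' ⧸ U.subgroupOf U') = p := by
      rw [← Subgroup.card_top (G := ↥U' ⧸ U.subgroupOf U'), ← htop, Nat.card_zpowers, horder]
    have hrel : U.relIndex U' = p := by
      rw [relIndex, Subgroup.index_eq_card, hcard]
    rw [← relIndex_mul_relIndex S U U' hSU hUleU', hrel]
end Ext

open Subgroup Function

section Phi
variable {p : ℕ} {G : Type*} [Group G]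

lemma pi_mult_pow_eq_one (hp : p.Prime) {k : ℕ} (g : Fin k → Multiplicative (ZMod p)) :
    g ^ p = 1 := by
  funext i
  show (g i) ^ p = 1
  apply Multiplicative.toAdd.injective
  rw [toAdd_pow]
  show p • (g i).toAdd = (0 : ZMod p)
  rw [nsmul_eq_mul]
  simp [ZMod.natCast_self]

lemma EAQ_of_phi (hp : p.Prime) {S T : Subgroup G} (hST : S ≤ T) {k : ℕ}
    (φ : ↥T →* (Fin k → Multiplicative (ZMod p)))
    (hker : φ.ker = S.subgroupOf T) : EAQ p S T := by
  have hmem : ∀ w : ↥T, φ w = 1 ↔ (w : G) ∈ S := by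
    intro w
    rw [← MonoidHom.mem_ker, hker, mem_subgroupOf]
  refine ⟨?_, ?_, ?_⟩
  · intro t ht
    rw [mem_normalizer_iff]
    intro h
    constructor
    · intro hh
      have hconj : t * h * t⁻¹ ∈ T := T.mul_mem (T.mul_mem ht (hST hh)) (T.inv_mem ht)
      have : (⟨t * h * t⁻¹, hconj⟩ : ↥T) = ⟨t, ht⟩ * ⟨h, hST hh⟩ * ⟨t, ht⟩⁻¹ := by
        ext; simp
      have h1 : φ ⟨t * h * t⁻¹, hconj⟩ = 1 := by
        rw [this, map_mul, map_mul, map_inv, (hmem ⟨h, hST hh⟩).2 hh, mul_one, mul_inv_cancel]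
      exact (hmem _).1 h1
    · intro hh
      have hhT : h ∈ T := by
        have : t⁻¹ * (t * h * t⁻¹) * t ∈ T :=
          T.mul_mem (T.mul_mem (T.inv_mem ht) (hST hh)) ht
        simpa [mul_assoc] using this
      have : (⟨t * h * t⁻¹, hST hh⟩ : ↥T) = ⟨t, ht⟩ * ⟨h, hhT⟩ * ⟨t, ht⟩⁻¹ := by
        ext; simp
      have h1 := (hmem ⟨t * h * t⁻¹, hST hh⟩).2 hh
      rw [this, map_mul, map_mul, map_inv] at h1
      have h2 : φ ⟨h, hhT⟩ = 1 := by
        have := congrArg (fun w => (φ ⟨t, ht⟩)⁻¹ * w * φ ⟨t, ht⟩) h1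
        simpa [mul_assoc] using this
      exact (hmem _).1 h2
  · intro x hx
    have : φ (⟨x, hx⟩ ^ p) = 1 := by rw [map_pow]; exact pi_mult_pow_eq_one hp _
    have h2 := (hmem _).1 this
    simpa using h2
  · intro x hx y hy
    have : φ (⟨x, hx⟩ * ⟨y, hy⟩ * ⟨x, hx⟩⁻¹ * ⟨y, hy⟩⁻¹) = 1 := by
      rw [map_mul, map_mul, map_mul, map_inv, map_inv]
      rw [mul_comm (φ ⟨x, hx⟩) (φ ⟨y, hy⟩)]
      group
    have h2 := (hmem _).1 this
    simpa [mul_assoc] using h2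

lemma relIndex_eq_pow_of_phi (hp : p.Prime) {S T : Subgroup G} {k : ℕ}
    (φ : ↥T →* (Fin k → Multiplicative (ZMod p))) (hsurj : Surjective φ)
    (hker : φ.ker = S.subgroupOf T) : S.relIndex T = p ^ k := by
  have e := QuotientGroup.quotientKerEquivOfSurjective φ hsurj
  rw [relIndex, Subgroup.index_eq_card, ← hker, Nat.card_congr e.toEquiv, Nat.card_pi]
  have hc : Nat.card (Multiplicative (ZMod p)) = p := by
    rw [Nat.card_congr Multiplicative.toAdd, Nat.card_zmod]
  simp [hc]

lemma EAQ.exists_phi (hp : p.Prime) [Finite G] {S T : Subgroup G} (hST : S ≤ T)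
    (h : EAQ p S T) :
    ∃ (k : ℕ) (φ : ↥T →* (Fin k → Multiplicative (ZMod p))),
      Surjective φ ∧ φ.ker = S.subgroupOf T := by
  haveI : Fact p.Prime := ⟨hp⟩
  haveI hnormal : (S.subgroupOf T).Normal := _root_.normal_subgroupOf_of_le_normalizer h.1
  letI instCG : CommGroup (↥T ⧸ S.subgroupOf T) :=
    { (inferInstance : Group (↥T ⧸ S.subgroupOf T)) with
      mul_comm := by
        intro a b
        obtain ⟨x, rfl⟩ := QuotientGroup.mk'_surjective _ a
        obtain ⟨y, rfl⟩ := QuotientGroup.mk'_surjective _ b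
        rw [QuotientGroup.mk'_apply, QuotientGroup.mk'_apply, ← QuotientGroup.mk_mul,
          ← QuotientGroup.mk_mul, QuotientGroup.eq]
        simp only [mem_subgroupOf]
        have := h.2.2 ((y : G))⁻¹ (T.inv_mem y.2) ((x : G))⁻¹ (T.inv_mem x.2)
        simpa [mul_assoc] using this }
  haveI : Module (ZMod p) (Additive (↥T ⧸ S.subgroupOf T)) := by
    refine AddCommGroup.zmodModule ?_
    intro x
    show Additive.ofMul ((Additive.toMul x) ^ p) = 0
    obtain ⟨w, hw⟩ := QuotientGroup.mk'_surjective (S.subgroupOf T) (Additive.toMul x)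
    rw [← hw, ← map_pow, QuotientGroup.mk'_apply]
    have : (w ^ p : ↥T) ∈ S.subgroupOf T := by
      rw [mem_subgroupOf]
      simpa using h.2.1 (w : G) w.2
    rw [QuotientGroup.eq_one_iff _ |>.2 this]
    rfl
  haveI : Module.Finite (ZMod p) (Additive (↥T ⧸ S.subgroupOf T)) := Module.Finite.of_finite
  set k := Module.finrank (ZMod p) (Additive (↥T ⧸ S.subgroupOf T)) with hk
  let b := Module.finBasis (ZMod p) (Additive (↥T ⧸ S.subgroupOf T))
  let ψ₁ : (↥T ⧸ S.subgroupOf T) ≃* Multiplicative (Additive (↥T ⧸ S.subgroupOf T)) :=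
    (MulEquiv.multiplicativeAdditive _).symm
  let ψ₂ := AddEquiv.toMultiplicative b.equivFun.toAddEquiv
  let ψ₃ := MulEquiv.piMultiplicative (fun _ : Fin k => ZMod p)
  refine ⟨k, (ψ₃.toMonoidHom.comp (ψ₂.toMonoidHom.comp ψ₁.toMonoidHom)).comp
    (QuotientGroup.mk' (S.subgroupOf T)), ?_, ?_⟩
  · exact ψ₃.surjective.comp ((ψ₂.surjective.comp ψ₁.surjective).comp
      (QuotientGroup.mk'_surjective _))
  · ext w
    simp only [MonoidHom.mem_ker, MonoidHom.comp_apply, MulEquiv.coe_toMonoidHom]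
    rw [show (1 : Fin k → Multiplicative (ZMod p)) = ψ₃ (ψ₂ (ψ₁ 1)) by simp,
      ψ₃.injective.eq_iff, ψ₂.injective.eq_iff, ψ₁.injective.eq_iff]
    rw [QuotientGroup.mk'_apply, QuotientGroup.eq_one_iff, mem_subgroupOf]

end Phi

open Function Submodule LinearMap

lemma count_compl_hyperplanes {p : ℕ} (hp : p.Prime) (V : Type*) [AddCommGroup V]
    [Module (ZMod p) V] [Finite V] {v : V} (hv : v ≠ 0) :
    Nat.card {W : Submodule (ZMod p) V // v ∉ W ∧ W ⊔ Submodule.span (ZMod p) {v} = ⊤} * p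
      = Nat.card V := by
  haveI : Fact p.Prime := ⟨hp⟩
  set L := Submodule.span (ZMod p) {v} with hL
  -- any W in the set is a complement of L
  have hcompl : ∀ W : Submodule (ZMod p) V, v ∉ W → W ⊔ L = ⊤ → IsCompl L W := by
    intro W hvW hsup
    constructor
    · rw [disjoint_iff]
      ext x
      simp only [Submodule.mem_inf, Submodule.mem_bot]
      constructor
      · rintro ⟨hxL, hxW⟩
        obtain ⟨c, rfl⟩ := Submodule.mem_span_singleton.1 hxL
        rcases eq_or_ne c 0 with rfl | hc
        · simp
        · exact absurd (by simpa [smul_smul, inv_mul_cancel₀ hc] using W.smul_mem c⁻¹ hxW) hvW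
      · rintro rfl; simp
    · rw [codisjoint_iff, sup_comm]
      exact hsup
  -- from a complement, build a functional
  have key : ∀ W : Submodule (ZMod p) V, IsCompl L W →
      ∃ f : V →ₗ[ZMod p] ZMod p, f v = 1 ∧ LinearMap.ker f = W := by
    intro W hW
    set e := LinearEquiv.toSpanNonzeroSingleton (ZMod p) V v hv with he
    refine ⟨e.symm.toLinearMap ∘ₗ Submodule.linearProjOfIsCompl L W hW, ?_, ?_⟩
    · have h1 : Submodule.linearProjOfIsCompl L W hW v =
          ⟨v, Submodule.mem_span_singleton_self v⟩ :=
        Submodule.linearProjOfIsCompl_apply_left hW ⟨v, Submodule.mem_span_singleton_self v⟩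
      have h2 : e 1 = ⟨v, Submodule.mem_span_singleton_self v⟩ := by
        rw [he]
        ext
        simp
      simp [h1, ← h2]
    · ext x
      simp only [LinearMap.mem_ker, LinearMap.coe_comp, Function.comp_apply,
        LinearEquiv.coe_coe]
      rw [LinearEquiv.map_eq_zero_iff, Submodule.linearProjOfIsCompl, Submodule.linearProjOfIsCompl_apply_eq_zero_iff]
  -- the functional determined by its kernel and value at v
  have keyinj : ∀ f g : V →ₗ[ZMod p] ZMod p, f v = 1 → g v = 1 →
      LinearMap.ker f = LinearMap.ker g → f = g := by
    intro f g hf hg hker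
    ext x
    have h1 : x - f x • v ∈ LinearMap.ker f := by
      simp [hf, map_smul, smul_eq_mul]
    rw [hker, LinearMap.mem_ker] at h1
    rw [map_sub, map_smul] at h1
    rw [hg] at h1
    have := sub_eq_zero.1 h1
    simpa using this.symm
  -- equiv between the W's and the f's
  have hbij : Nat.card {W : Submodule (ZMod p) V // v ∉ W ∧ W ⊔ L = ⊤} =
      Nat.card {f : V →ₗ[ZMod p] ZMod p // f v = 1} := by
    refine Nat.card_congr (Equiv.symm (Equiv.ofBijective (fun fh =>
      ⟨LinearMap.ker fh.1, ?_, ?_⟩) ⟨?_, ?_⟩))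
    · intro hmem
      rw [LinearMap.mem_ker, fh.2] at hmem
      exact one_ne_zero hmem
    · -- ker f ⊔ L = ⊤
      rw [eq_top_iff]
      intro x _
      have hdecomp : x = (x - fh.1 x • v) + fh.1 x • v := by abel
      rw [hdecomp]
      refine Submodule.add_mem_sup ?_ ?_
      · rw [LinearMap.mem_ker, map_sub, map_smul, fh.2, smul_eq_mul, mul_one, sub_self]
      · exact Submodule.smul_mem _ _ (Submodule.mem_span_singleton_self v)
    · rintro ⟨f, hf⟩ ⟨g, hg⟩ hfg
      simp only [Subtype.mk.injEq] at hfg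
      exact Subtype.ext (keyinj f g hf hg hfg)
    · rintro ⟨W, hvW, hsup⟩
      obtain ⟨f, hf1, hfker⟩ := key W (hcompl W hvW hsup)
      exact ⟨⟨f, hf1⟩, Subtype.ext hfker⟩
  rw [hbij]
  -- count the functionals with f v = 1
  obtain ⟨W₀, hW₀⟩ := Submodule.exists_isCompl L
  obtain ⟨f₀, hf₀, _⟩ := key W₀ hW₀
  set ev : (V →ₗ[ZMod p] ZMod p) →+ ZMod p :=
    AddMonoidHom.mk' (fun f => f v) (fun f g => rfl) with hev
  have hevsurj : Surjective ev := by
    intro c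
    exact ⟨c • f₀, by simp [hev, hf₀]⟩
  have hkerEquiv : {f : V →ₗ[ZMod p] ZMod p // f v = 1} ≃ ev.ker := by
    refine ⟨fun f => ⟨f.1 - f₀, ?_⟩, fun g => ⟨g.1 + f₀, ?_⟩, fun f => by simp, fun g => by simp⟩
    · rw [AddMonoidHom.mem_ker]
      simp [hev, f.2, hf₀]
    · have := g.2
      rw [AddMonoidHom.mem_ker] at this
      simp only [hev, AddMonoidHom.mk'_apply] at this ⊢
      simp [this, hf₀]
  rw [Nat.card_congr hkerEquiv]
  haveI : Finite (V →ₗ[ZMod p] ZMod p) :=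
    Finite.of_injective _ (DFunLike.coe_injective (F := V →ₗ[ZMod p] ZMod p))
  have hindex : ev.ker.index = p := by
    rw [AddSubgroup.index_eq_card,
      Nat.card_congr (QuotientAddGroup.quotientKerEquivOfSurjective ev hevsurj).toEquiv,
      Nat.card_zmod]
  have htot := AddSubgroup.card_mul_index ev.ker
  rw [hindex] at htot
  rw [htot]
  -- card of dual equals card of V
  haveI : Fintype V := Fintype.ofFinite V
  haveI : Fintype (V →ₗ[ZMod p] ZMod p) := Fintype.ofFinite _
  haveI : Module.Finite (ZMod p) V := Module.Finite.of_finite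
  rw [Nat.card_eq_fintype_card, Nat.card_eq_fintype_card]
  rw [Module.card_eq_pow_finrank (K := ZMod p) (V := V →ₗ[ZMod p] ZMod p),
    Module.card_eq_pow_finrank (K := ZMod p) (V := V), ZMod.card]
  congr 1
  exact Subspace.dual_finrank_eq

open Subgroup Function

lemma fiber_card {p : ℕ} (hp : p.Prime) {G : Type*} [Group G] [Finite G]
    {S F : Subgroup G} (hSF : S ≤ F) (hEA : EAQ p S F) {z : G} (hzF : z ∈ F) (hzS : z ∉ S) :
    Nat.card {U : Subgroup G // S ≤ U ∧ U ≤ F ∧ z ∉ U ∧ U ⊔ Subgroup.closure {z} = F} * p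
      = S.relIndex F := by
  haveI : Fact p.Prime := ⟨hp⟩
  haveI hnormal : (S.subgroupOf F).Normal := _root_.normal_subgroupOf_of_le_normalizer hEA.1
  letI instCG : CommGroup (↥F ⧸ S.subgroupOf F) :=
    { (inferInstance : Group (↥F ⧸ S.subgroupOf F)) with
      mul_comm := by
        intro a b
        obtain ⟨x, rfl⟩ := QuotientGroup.mk'_surjective _ a
        obtain ⟨y, rfl⟩ := QuotientGroup.mk'_surjective _ b
        rw [QuotientGroup.mk'_apply, QuotientGroup.mk'_apply, ← QuotientGroup.mk_mul,
          ← QuotientGroup.mk_mul, QuotientGroup.eq]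
        simp only [mem_subgroupOf]
        have := hEA.2.2 ((y : G))⁻¹ (F.inv_mem y.2) ((x : G))⁻¹ (F.inv_mem x.2)
        simpa [mul_assoc] using this }
  haveI instMod : Module (ZMod p) (Additive (↥F ⧸ S.subgroupOf F)) := by
    refine AddCommGroup.zmodModule ?_
    intro x
    show Additive.ofMul ((Additive.toMul x) ^ p) = 0
    obtain ⟨w, hw⟩ := QuotientGroup.mk'_surjective (S.subgroupOf F) (Additive.toMul x)
    rw [← hw, ← map_pow, QuotientGroup.mk'_apply]
    have : (w ^ p : ↥F) ∈ S.subgroupOf F := by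
      rw [mem_subgroupOf]
      simpa using hEA.2.1 (w : G) w.2
    rw [QuotientGroup.eq_one_iff _ |>.2 this]
    rfl
  set π := QuotientGroup.mk' (S.subgroupOf F) with hπ
  set Θ : Subgroup (↥F ⧸ S.subgroupOf F) → Submodule (ZMod p) (Additive (↥F ⧸ S.subgroupOf F)) :=
    fun X => AddSubgroup.toZModSubmodule p (Subgroup.toAddSubgroup X) with hΘ
  have hΘmem : ∀ (X : Subgroup (↥F ⧸ S.subgroupOf F)) (a : ↥F ⧸ S.subgroupOf F),
      Additive.ofMul a ∈ Θ X ↔ a ∈ X := fun _ _ => Iff.rfl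
  have hΘmono : ∀ X Y, X ≤ Y ↔ Θ X ≤ Θ Y := by
    intro X Y
    constructor
    · intro h a ha
      exact (hΘmem Y (Additive.toMul a)).2 (h ((hΘmem X (Additive.toMul a)).1 ha))
    · intro h a ha
      exact (hΘmem Y a).1 (h ((hΘmem X a).2 ha))
  have hΘinj : Function.Injective Θ := by
    intro X Y h
    exact le_antisymm ((hΘmono X Y).2 h.le) ((hΘmono Y X).2 h.ge)
  have hΘsup : ∀ X Y, Θ (X ⊔ Y) = Θ X ⊔ Θ Y := by
    intro X Y
    simp only [hΘ]
    rw [OrderIso.map_sup, OrderIso.map_sup]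
  have hΘtop : Θ ⊤ = ⊤ := by
    simp only [hΘ]
    rw [OrderIso.map_top, OrderIso.map_top]
  set zF : ↥F := ⟨z, hzF⟩ with hzFdef
  set qz := π zF with hqz
  set v : Additive (↥F ⧸ S.subgroupOf F) := Additive.ofMul qz with hv
  have hvne : v ≠ 0 := by
    intro h
    have : qz = 1 := h
    rw [hqz, hπ, QuotientGroup.mk'_apply, QuotientGroup.eq_one_iff, mem_subgroupOf] at this
    exact hzS this
  have hspan : Θ (Subgroup.zpowers qz) = Submodule.span (ZMod p) {v} := by
    refine le_antisymm ?_ ?_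
    · intro x hx
      have hx' : Additive.toMul x ∈ Subgroup.zpowers qz :=
        (hΘmem _ (Additive.toMul x)).1 hx
      obtain ⟨i, hi⟩ := hx'
      have : x = i • v := by
        rw [hv, ← ofMul_zpow]
        exact congrArg Additive.ofMul hi.symm
      rw [this]
      exact zsmul_mem (Submodule.mem_span_singleton_self v) i
    · rw [Submodule.span_le, Set.singleton_subset_iff]
      exact (hΘmem _ qz).2 (Subgroup.mem_zpowers qz)
  -- correspondence facts
  have hker : π.ker = S.subgroupOf F := QuotientGroup.ker_mk' _
  have hα : ∀ U : Subgroup G, S ≤ U →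
      Subgroup.comap π (Subgroup.map π (U.subgroupOf F)) = U.subgroupOf F := by
    intro U hSU
    rw [Subgroup.comap_map_eq, hker, sup_eq_left]
    intro a ha
    rw [mem_subgroupOf] at ha ⊢
    exact hSU ha
  have hβ : ∀ (U : Subgroup G), S ≤ U → ∀ (a : G) (ha : a ∈ F),
      (π ⟨a, ha⟩ ∈ Subgroup.map π (U.subgroupOf F) ↔ a ∈ U) := by
    intro U hSU a ha
    rw [show (π ⟨a, ha⟩ ∈ Subgroup.map π (U.subgroupOf F)) ↔
        (⟨a, ha⟩ : ↥F) ∈ Subgroup.comap π (Subgroup.map π (U.subgroupOf F)) from Iff.rfl,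
      hα U hSU, mem_subgroupOf]
  -- the equivalence
  have E1 : {U : Subgroup G // S ≤ U ∧ U ≤ F ∧ z ∉ U ∧ U ⊔ Subgroup.closure {z} = F} ≃
      {W : Submodule (ZMod p) (Additive (↥F ⧸ S.subgroupOf F)) //
        v ∉ W ∧ W ⊔ Submodule.span (ZMod p) {v} = ⊤} := by
    refine ⟨fun U => ⟨Θ (Subgroup.map π (U.1.subgroupOf F)), ?_, ?_⟩,
      fun W => ⟨Subgroup.map F.subtype
        (Subgroup.comap π (Subgroup.toAddSubgroup.symm ((AddSubgroup.toZModSubmodule p).symm W.1))),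
        ?_, ?_, ?_, ?_⟩, ?_, ?_⟩
    · -- v ∉ Θ(..)
      obtain ⟨U, hSU, hUF, hzU, hsup⟩ := U
      rw [hv, hΘmem, hqz, hzFdef, hβ U hSU z hzF]
      exact hzU
    · -- sup = ⊤
      obtain ⟨U, hSU, hUF, hzU, hsup⟩ := U
      have inner : U.subgroupOf F ⊔ Subgroup.zpowers zF = ⊤ := by
        apply Subgroup.map_injective F.subtype_injective
        rw [Subgroup.map_sup, Subgroup.subgroupOf_map_subtype, MonoidHom.map_zpowers]
        have h1 : F.subtype zF = z := rfl
        rw [h1, inf_eq_left.2 hUF, Subgroup.zpowers_eq_closure]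
        rw [hsup, ← MonoidHom.range_eq_map, Subgroup.range_subtype]
      have h2 : Subgroup.map π (U.subgroupOf F) ⊔ Subgroup.zpowers qz = ⊤ := by
        rw [hqz, ← MonoidHom.map_zpowers, ← Subgroup.map_sup, inner]
        exact Subgroup.map_top_of_surjective _ (QuotientGroup.mk'_surjective _)
      rw [← hspan, ← hΘsup, h2, hΘtop]
    · -- S ≤ U_W
      obtain ⟨W, hvW, hWsup⟩ := W
      intro s hs
      refine Subgroup.mem_map.2 ⟨⟨s, hSF hs⟩, ?_, rfl⟩
      rw [Subgroup.mem_comap]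
      have : π ⟨s, hSF hs⟩ = 1 := by
        rw [hπ, QuotientGroup.mk'_apply, QuotientGroup.eq_one_iff, mem_subgroupOf]
        exact hs
      rw [this]
      exact one_mem _
    · exact Subgroup.map_subtype_le _
    · -- z ∉ U_W
      obtain ⟨W, hvW, hWsup⟩ := W
      intro hz
      rw [Subgroup.mem_map] at hz
      obtain ⟨y, hy, hyz⟩ := hz
      have hyzF : y = zF := Subtype.ext hyz
      rw [hyzF, Subgroup.mem_comap] at hy
      apply hvW
      have : Additive.ofMul (π zF) ∈ W := by
        have h3 := (hΘmem (Subgroup.toAddSubgroup.symm ((AddSubgroup.toZModSubmodule p).symm W))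
          (π zF)).2 hy
        rwa [show Θ (Subgroup.toAddSubgroup.symm ((AddSubgroup.toZModSubmodule p).symm W)) = W by simp only [hΘ]; rw [OrderIso.apply_symm_apply, OrderIso.apply_symm_apply]] at h3
      rwa [hv, hqz]
    · -- sup
      obtain ⟨W, hvW, hWsup⟩ := W
      set Wgrp := Subgroup.toAddSubgroup.symm ((AddSubgroup.toZModSubmodule p).symm W) with hWgrp
      have hΘW : Θ Wgrp = W := by
        simp only [hΘ, hWgrp]
        rw [OrderIso.apply_symm_apply, OrderIso.apply_symm_apply]
      have hclaim : Subgroup.comap π Wgrp ⊔ Subgroup.zpowers zF = ⊤ := by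
        have hkerle : π.ker ≤ Subgroup.comap π Wgrp ⊔ Subgroup.zpowers zF := by
          intro a ha
          rw [MonoidHom.mem_ker] at ha
          apply Subgroup.mem_sup_left
          rw [Subgroup.mem_comap, ha]
          exact one_mem _
        have hmap : Subgroup.map π (Subgroup.comap π Wgrp ⊔ Subgroup.zpowers zF) = ⊤ := by
          rw [Subgroup.map_sup, Subgroup.map_comap_eq_self_of_surjective
            (QuotientGroup.mk'_surjective _), MonoidHom.map_zpowers]
          apply hΘinj
          rw [hΘsup, hΘtop, hΘW, ← hqz, hspan, hWsup]
        have := congrArg (Subgroup.comap π) hmap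
        rwa [Subgroup.comap_map_eq, sup_of_le_left hkerle, Subgroup.comap_top] at this
      rw [← Subgroup.zpowers_eq_closure,
        show Subgroup.zpowers z = Subgroup.map F.subtype (Subgroup.zpowers zF) by
          rw [MonoidHom.map_zpowers]; rfl,
        ← Subgroup.map_sup, hclaim, ← MonoidHom.range_eq_map, Subgroup.range_subtype]
    · -- left inverse
      rintro ⟨U, hSU, hUF, hzU, hsup⟩
      apply Subtype.ext
      show Subgroup.map F.subtype (Subgroup.comap π (Subgroup.toAddSubgroup.symm
        ((AddSubgroup.toZModSubmodule p).symm (Θ (Subgroup.map π (U.subgroupOf F)))))) = U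
      have h1 : Subgroup.toAddSubgroup.symm ((AddSubgroup.toZModSubmodule p).symm
          (Θ (Subgroup.map π (U.subgroupOf F)))) = Subgroup.map π (U.subgroupOf F) := by
        simp only [hΘ]
        rw [OrderIso.symm_apply_apply, OrderIso.symm_apply_apply]
      rw [h1, hα U hSU, Subgroup.subgroupOf_map_subtype, inf_eq_left.2 hUF]
    · -- right inverse
      rintro ⟨W, hvW, hWsup⟩
      apply Subtype.ext
      set Wgrp := Subgroup.toAddSubgroup.symm ((AddSubgroup.toZModSubmodule p).symm W) with hWgrp
      show Θ (Subgroup.map π ((Subgroup.map F.subtype (Subgroup.comap π Wgrp)).subgroupOf F)) = W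
      have h1 : (Subgroup.map F.subtype (Subgroup.comap π Wgrp)).subgroupOf F =
          Subgroup.comap π Wgrp := by
        rw [Subgroup.subgroupOf]
        exact Subgroup.comap_map_eq_self_of_injective F.subtype_injective _
      rw [h1, Subgroup.map_comap_eq_self_of_surjective (QuotientGroup.mk'_surjective _)]
      simp only [hΘ, hWgrp]
      rw [OrderIso.apply_symm_apply, OrderIso.apply_symm_apply]
  rw [Nat.card_congr E1, count_compl_hyperplanes hp _ hvne,
    Nat.card_congr (Additive.toMul (α := ↥F ⧸ S.subgroupOf F)), relIndex,
    Subgroup.index_eq_card]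

open Subgroup Function

lemma exp_succ_identity (k : ℕ) : (k + 1) * k / 2 = k + k * (k - 1) / 2 := by
  have h : (k + 1) * k / 2 = (k + 1).choose 2 := by
    rw [Nat.choose_two_right]
    simp
  rw [h, Nat.choose_succ_succ (n := k) (k := 1), Nat.choose_one_right, Nat.choose_two_right]

open scoped Classical in
lemma sum_mobW_eq_zero {p : ℕ} (hp : p.Prime) {G : Type*} [Group G] [Finite G]
    [Fintype (Subgroup G)]
    (hG : IsPGroup p G) {S T : Subgroup G} (hST : S < T) :
    ∑ U ∈ Finset.univ.filter (fun U : Subgroup G => S ≤ U ∧ U ≤ T), mobW p S U = 0 := by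
  haveI : Fact p.Prime := ⟨hp⟩
  obtain ⟨z, hzT, hzNorm, hzS, hzp, hzc⟩ := exists_z hp hG hST
  set A : Finset (Subgroup G) := Finset.univ.filter (fun U : Subgroup G => S ≤ U ∧ U ≤ T)
    with hA
  set A' := A.filter (fun U => EAQ p S U) with hA'
  have hstep1 : ∑ U ∈ A, mobW p S U = ∑ U ∈ A', mobW p S U := by
    rw [hA']
    refine (Finset.sum_filter_of_ne ?_).symm
    intro U _ hne
    by_contra hEAQ
    exact hne (mobW_of_not_EAQ hEAQ)
  rw [hstep1, ← Finset.sum_filter_add_sum_filter_not A' (fun U => z ∈ U)]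
  set A₁ := A'.filter (fun U => z ∈ U) with hA₁
  set A₀ := A'.filter (fun U => ¬ z ∈ U) with hA₀
  have hmem₁ : ∀ {F : Subgroup G}, F ∈ A₁ ↔ (S ≤ F ∧ F ≤ T) ∧ EAQ p S F ∧ z ∈ F := by
    intro F
    simp only [hA₁, hA', hA, Finset.mem_filter, Finset.mem_univ, true_and]
    tauto
  have hmem₀ : ∀ {U : Subgroup G}, U ∈ A₀ ↔ (S ≤ U ∧ U ≤ T) ∧ EAQ p S U ∧ z ∉ U := by
    intro U
    simp only [hA₀, hA', hA, Finset.mem_filter, Finset.mem_univ, true_and]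
    tauto
  have hmapsto : ∀ U ∈ A₀, U ⊔ Subgroup.closure {z} ∈ A₁ := by
    intro U hU
    obtain ⟨⟨hSU, hUT⟩, hEAU, hzU⟩ := hmem₀.1 hU
    have hext := EAQ_extend hp hSU hEAU hzNorm hzS hzp hzU
      (fun u hu => hzc u (hUT hu) (hEAU.1 hu))
    refine hmem₁.2 ⟨⟨hSU.trans le_sup_left, ?_⟩, hext.1,
      Subgroup.mem_sup_right (Subgroup.subset_closure (Set.mem_singleton z))⟩
    exact sup_le hUT ((Subgroup.closure_le _).2 (Set.singleton_subset_iff.2 hzT))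
  rw [show ∑ U ∈ A₀, mobW p S U =
      ∑ F ∈ A₁, ∑ U ∈ A₀.filter (fun U => U ⊔ Subgroup.closure {z} = F), mobW p S U from
    (Finset.sum_fiberwise_of_maps_to hmapsto _).symm]
  have hfib : ∀ F ∈ A₁,
      ∑ U ∈ A₀.filter (fun U => U ⊔ Subgroup.closure {z} = F), mobW p S U = - mobW p S F := by
    intro F hF
    obtain ⟨⟨hSF, hFT⟩, hEAF, hzF⟩ := hmem₁.1 hF
    -- relIndex S F is a power of p
    obtain ⟨n, hn⟩ := IsPGroup.exists_card_eq hG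
    have hdvd : S.relIndex F ∣ p ^ n := by
      rw [← hn]
      exact dvd_trans (Dvd.intro_left _ (Subgroup.card_mul_index (S.subgroupOf F)))
        (Subgroup.card_subgroup_dvd_card F)
    obtain ⟨m, hmn, hm⟩ := (Nat.dvd_prime_pow hp).1 hdvd
    have hm1 : m ≠ 0 := by
      rintro rfl
      rw [pow_zero] at hm
      have : S.subgroupOf F = ⊤ := Subgroup.index_eq_one.1 hm
      apply hzS
      have : (⟨z, hzF⟩ : ↥F) ∈ S.subgroupOf F := this ▸ Subgroup.mem_top _
      rwa [mem_subgroupOf] at this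
    obtain ⟨k, rfl⟩ := Nat.exists_eq_succ_of_ne_zero hm1
    -- fiber description
    have hfibeq : A₀.filter (fun U => U ⊔ Subgroup.closure {z} = F) =
        Finset.univ.filter
          (fun U : Subgroup G => S ≤ U ∧ U ≤ F ∧ z ∉ U ∧ U ⊔ Subgroup.closure {z} = F) := by
      ext U
      simp only [Finset.mem_filter, Finset.mem_univ, true_and]
      constructor
      · rintro ⟨hU, hsup⟩
        obtain ⟨⟨hSU, hUT⟩, hEAU, hzU⟩ := hmem₀.1 hU
        exact ⟨hSU, hsup ▸ le_sup_left, hzU, hsup⟩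
      · rintro ⟨hSU, hUF, hzU, hsup⟩
        exact ⟨hmem₀.2 ⟨⟨hSU, hUF.trans hFT⟩, hEAF.mono_right hUF, hzU⟩, hsup⟩
    -- value of mobW on the fiber
    have hval : ∀ U ∈ A₀.filter (fun U => U ⊔ Subgroup.closure {z} = F),
        mobW p S U = (-1) ^ k * (p : ℤ) ^ (k * (k - 1) / 2) := by
      intro U hU
      rw [Finset.mem_filter] at hU
      obtain ⟨hU0, hsup⟩ := hU
      obtain ⟨⟨hSU, hUT⟩, hEAU, hzU⟩ := hmem₀.1 hU0
      have hext := EAQ_extend hp hSU hEAU hzNorm hzS hzp hzU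
        (fun u hu => hzc u (hUT hu) (hEAU.1 hu))
      have hrel : S.relIndex U * p = p ^ (k + 1) := by
        rw [← hm, ← hsup, hext.2]
      have hrelU : S.relIndex U = p ^ k := by
        have : S.relIndex U * p = p ^ k * p := by rw [hrel, pow_succ]
        exact Nat.eq_of_mul_eq_mul_right hp.pos this
      rw [mobW_of_EAQ hEAU, hrelU]
      simp [hp.factorization_pow]
    -- cardinality of the fiber
    have hcard : (A₀.filter (fun U => U ⊔ Subgroup.closure {z} = F)).card = p ^ k := by
      rw [hfibeq]
      have := fiber_card hp hSF hEAF hzF hzS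
      rw [hm] at this
      have hsub : Nat.card {U : Subgroup G // S ≤ U ∧ U ≤ F ∧ z ∉ U ∧
          U ⊔ Subgroup.closure {z} = F} = (Finset.univ.filter
          (fun U : Subgroup G => S ≤ U ∧ U ≤ F ∧ z ∉ U ∧
            U ⊔ Subgroup.closure {z} = F)).card := by
        rw [Nat.card_eq_fintype_card, Fintype.card_subtype]
      rw [hsub] at this
      have : (Finset.univ.filter
          (fun U : Subgroup G => S ≤ U ∧ U ≤ F ∧ z ∉ U ∧
            U ⊔ Subgroup.closure {z} = F)).card * p = p ^ k * p := by
        rw [this, pow_succ]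
      exact Nat.eq_of_mul_eq_mul_right hp.pos this
    rw [Finset.sum_congr rfl hval, Finset.sum_const, hcard, mobW_of_EAQ hEAF, hm]
    simp only [hp.factorization_pow, Finsupp.single_eq_same]
    rw [nsmul_eq_mul]
    push_cast
    rw [show (k + 1) * k / 2 = k + k * (k - 1) / 2 from exp_succ_identity k, pow_add, pow_succ]
    ring
  rw [Finset.sum_congr rfl hfib, ← Finset.sum_add_distrib]
  simp

open Subgroup Function

open scoped Classical in
lemma mobius_eq_mobW {p : ℕ} (hp : p.Prime) {G : Type*} [Group G] [Finite G]
    (hG : IsPGroup p G) (μ : Subgroup G → Subgroup G → ℤ) (hμ : IsSubgroupMobius μ) :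
    ∀ (n : ℕ) (T S : Subgroup G), Nat.card T ≤ n → S ≤ T → μ S T = mobW p S T := by
  haveI : Finite (Subgroup G) := Finite.of_injective _ (SetLike.coe_injective (A := Subgroup G))
  haveI : Fintype (Subgroup G) := Fintype.ofFinite _
  intro n
  induction n with
  | zero =>
    intro T S hcard _
    have : 0 < Nat.card ↥T := Nat.card_pos
    omega
  | succ n ih =>
    intro T S hcard hST
    rcases eq_or_lt_of_le hST with rfl | hlt
    · rw [hμ.1, mobW_self]
    · have hsum := hμ.2 S T hlt
      have hseteq : {U : Subgroup G | S ≤ U ∧ U ≤ T} =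
          ↑(Finset.univ.filter (fun U : Subgroup G => S ≤ U ∧ U ≤ T)) := by
        ext U; simp
      rw [hseteq, finsum_mem_coe_finset] at hsum
      have hTmem : T ∈ Finset.univ.filter (fun U : Subgroup G => S ≤ U ∧ U ≤ T) := by
        simp [hST]
      rw [← Finset.add_sum_erase _ _ hTmem] at hsum
      have herase : ∀ U ∈ (Finset.univ.filter (fun U : Subgroup G => S ≤ U ∧ U ≤ T)).erase T,
          μ S U = mobW p S U := by
        intro U hU
        rw [Finset.mem_erase, Finset.mem_filter] at hU
        obtain ⟨hne, _, hSU, hUT⟩ := hU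
        have hUltT : U < T := lt_of_le_of_ne hUT hne
        have hlt' : Nat.card U < Nat.card T :=
          lt_of_le_of_ne (Subgroup.card_le_of_le hUltT.le)
            (fun he => hUltT.ne (Subgroup.eq_of_le_of_card_ge hUltT.le he.ge))
        exact ih U S (by omega) hSU
      rw [Finset.sum_congr rfl herase] at hsum
      have hz := sum_mobW_eq_zero hp hG hlt
      rw [← Finset.add_sum_erase _ _ hTmem] at hz
      linarith

theorem mobius_subgroup_lattice_pGroup {p : ℕ} (hp : p.Prime) {G : Type*} [Group G]
    [Finite G] (hG : IsPGroup p G) (μ : Subgroup G → Subgroup G → ℤ)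
    (hμ : IsSubgroupMobius μ) (S T : Subgroup G) (hST : S ≤ T) :
    (∀ k : ℕ, (∃ φ : T →* (Fin k → Multiplicative (ZMod p)),
        Function.Surjective φ ∧ φ.ker = S.subgroupOf T) →
      μ S T = (-1) ^ k * (p : ℤ) ^ (k * (k - 1) / 2)) ∧
    ((¬ ∃ k : ℕ, ∃ φ : T →* (Fin k → Multiplicative (ZMod p)),
        Function.Surjective φ ∧ φ.ker = S.subgroupOf T) →
      μ S T = 0) := by
  have hμT : μ S T = mobW p S T := mobius_eq_mobW hp hG μ hμ (Nat.card T) T S le_rfl hST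
  constructor
  · rintro k ⟨φ, hsurj, hker⟩
    have hEA : EAQ p S T := EAQ_of_phi hp hST φ hker
    have hrel : S.relIndex T = p ^ k := relIndex_eq_pow_of_phi hp φ hsurj hker
    rw [hμT, mobW_of_EAQ hEA, hrel]
    simp [hp.factorization_pow]
  · intro hne
    rw [hμT]
    apply mobW_of_not_EAQ
    intro hEA
    exact hne (EAQ.exists_phi hp hST hEA)
end

section
/- Let G be a finite p-group, Z its center, and suppose Z is not a maximal abelian subgroup of G. Then the number of maximal abelian subgroups of G is congruent modulo p to the number of abelian subgroups T of G with Z ⊊ T and [T : Z] = p. -/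
open Subgroup
open scoped Pointwise

section Helpers

variable {p : ℕ}

/-- Every maximal commutative subgroup contains the center. -/
theorem center_le_of_maximal_isComm {G : Type*} [Group G] {A : Subgroup G}
    (hA : Maximal (fun H : Subgroup _ => IsMulCommutative H) A) : Subgroup.center G ≤ A := by
  have hA' := hA.1
  have hsup : IsMulCommutative ↥(A ⊔ Subgroup.center G) := by
    constructor
    constructor
    rintro ⟨x, hx⟩ ⟨y, hy⟩
    have hx' : x ∈ (A : Set G) * (Subgroup.center G : Set G) := by
      rw [← Subgroup.mul_normal]; exact hx
    have hy' : y ∈ (A : Set G) * (Subgroup.center G : Set G) := by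
      rw [← Subgroup.mul_normal]; exact hy
    obtain ⟨a, ha, z, hz, rfl⟩ := hx'
    obtain ⟨b, hb, w, hw, rfl⟩ := hy'
    have hzc : ∀ g, g * z = z * g := Subgroup.mem_center_iff.mp hz
    have hwc : ∀ g, g * w = w * g := Subgroup.mem_center_iff.mp hw
    have cab : Commute a b := by
      haveI : IsMulCommutative A := hA'; exact Subgroup.mul_comm_of_mem_isMulCommutative A ha hb
    ext
    show a * z * (b * w) = b * w * (a * z)
    exact ((cab.mul_right (hwc a)).mul_left ((Commute.symm (hzc b)).mul_right (hwc z)))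
  exact le_sup_right.trans (hA.2 hsup le_sup_left)

theorem isComm_of_le {G : Type*} [Group G] {T A : Subgroup G} (h : T ≤ A)
    (hA : IsMulCommutative A) : IsMulCommutative T := by
  haveI := hA
  constructor
  constructor
  intro a b
  exact Subtype.ext (Subgroup.mul_comm_of_mem_isMulCommutative A (h a.2) (h b.2))

open Equiv.Perm in
theorem card_pow_eq_one_modEq (hp : p.Prime) {H : Type*} [Group H] [Finite H]
    (hd : p ∣ Nat.card H) : Nat.card {x : H // x ^ p = 1} ≡ 0 [MOD p] := by
  classical
  have : Fintype H := Fintype.ofFinite H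
  have hp1 : 0 < p := hp.pos
  haveI : NeZero p := ⟨hp1.ne'⟩
  haveI : Fact p.Prime := ⟨hp⟩
  set V := vectorsProdEqOne H p with hV
  have hrot : ∀ (v : V) (k : ℕ),
      VectorsProdEqOne.rotate v (k % p) = VectorsProdEqOne.rotate v k := by
    intro v k
    conv_rhs => rw [← Nat.div_add_mod k p]
    generalize k / p = q
    induction q with
    | zero => simp
    | succ n ih =>
      rw [Nat.mul_succ, add_right_comm, ← VectorsProdEqOne.rotate_rotate,
        VectorsProdEqOne.rotate_length]
      exact ih
  letI : MulAction (Multiplicative (ZMod p)) V :=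
  { smul := fun g v => VectorsProdEqOne.rotate v (Multiplicative.toAdd g).val
    one_smul := fun v => by
      show VectorsProdEqOne.rotate v (ZMod.val (0 : ZMod p)) = v
      rw [ZMod.val_zero, VectorsProdEqOne.rotate_zero]
    mul_smul := fun g h v => by
      show VectorsProdEqOne.rotate v ((Multiplicative.toAdd g + Multiplicative.toAdd h).val)
        = VectorsProdEqOne.rotate (VectorsProdEqOne.rotate v (Multiplicative.toAdd h).val)
          (Multiplicative.toAdd g).val
      rw [VectorsProdEqOne.rotate_rotate, ZMod.val_add, hrot, add_comm] }
  have hPG : IsPGroup p (Multiplicative (ZMod p)) := by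
    apply IsPGroup.of_card (n := 1)
    simp [Nat.card_eq_fintype_card, ZMod.card]
  haveI : Fact (1 < p) := ⟨hp.one_lt⟩
  have hmod := hPG.card_modEq_card_fixedPoints (α := V)
  have hcV : Nat.card V = Nat.card H ^ (p - 1) := by
    rw [Nat.card_eq_fintype_card, Nat.card_eq_fintype_card]
    exact VectorsProdEqOne.card H p
  let f : {x : H // x ^ p = 1} → MulAction.fixedPoints (Multiplicative (ZMod p)) V :=
    fun x => ⟨⟨⟨List.replicate p x.1, List.length_replicate⟩,
      show (List.replicate p x.1).prod = 1 by rw [List.prod_replicate]; exact x.2⟩,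
      fun g => Subtype.ext (Subtype.ext (List.rotate_replicate x.1 p _))⟩
  have hfbij : Function.Bijective f := by
    constructor
    · rintro ⟨x, hx⟩ ⟨y, hy⟩ hxy
      have : List.replicate p x = List.replicate p y :=
        congrArg (fun v => v.1.1.1) hxy
      have := List.eq_of_mem_replicate (this ▸ List.mem_replicate.mpr ⟨hp1.ne', rfl⟩)
      exact Subtype.ext this
    · rintro ⟨⟨⟨l, hl⟩, hprod⟩, hfix⟩
      have h1 := hfix (Multiplicative.ofAdd (1 : ZMod p))
      have h1' : l.rotate 1 = l := by
        have h2 : l.rotate ((1 : ZMod p).val) = l := congrArg (fun v => v.1.1) h1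
        rwa [ZMod.val_one] at h2
      haveI : Nonempty H := ⟨1⟩
      obtain ⟨a, ha⟩ := List.rotate_one_eq_self_iff_eq_replicate.mp h1'
      have hlen : l.length = p := hl
      have hap : a ^ p = 1 := by
        have : l.prod = 1 := hprod
        rwa [ha, hlen, List.prod_replicate] at this
      refine ⟨⟨a, hap⟩, ?_⟩
      apply Subtype.ext; apply Subtype.ext; apply Subtype.ext
      show List.replicate p a = l
      rw [ha, hlen]
  have hcard : Nat.card {x : H // x ^ p = 1} =
      Nat.card (MulAction.fixedPoints (Multiplicative (ZMod p)) V) :=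
    Nat.card_eq_of_bijective f hfbij
  have h0 : Nat.card V ≡ 0 [MOD p] := by
    rw [hcV]
    exact (Nat.modEq_zero_iff_dvd).mpr (dvd_pow hd (Nat.sub_ne_zero_of_lt hp.one_lt))
  rw [hcard]
  exact hmod.symm.trans h0

theorem card_subgroup_prime_modEq_one (hp : p.Prime) {H : Type*} [Group H] [Finite H]
    (hd : p ∣ Nat.card H) :
    Nat.card {K : Subgroup H // Nat.card K = p} ≡ 1 [MOD p] := by
  classical
  have : Fintype H := Fintype.ofFinite H
  have : Fintype (Subgroup H) := Fintype.ofFinite _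
  set ΩF : Finset (Subgroup H) := Finset.univ.filter (fun K => Nat.card K = p) with hΩF
  set Ap : Finset H := Finset.univ.filter (fun x => orderOf x = p) with hAp
  set A1 : Finset H := Finset.univ.filter (fun x => x ^ p = 1) with hA1
  have hA1eq : A1 = insert 1 Ap := by
    ext x
    simp only [hA1, hAp, Finset.mem_filter, Finset.mem_univ, true_and, Finset.mem_insert]
    rw [← orderOf_dvd_iff_pow_eq_one, Nat.dvd_prime hp, orderOf_eq_one_iff]
  have h1notin : (1 : H) ∉ Ap := by
    simp only [hAp, Finset.mem_filter, Finset.mem_univ, true_and, orderOf_one]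
    exact fun h => hp.one_lt.ne h
  have hA1card : A1.card = Ap.card + 1 := by
    rw [hA1eq, Finset.card_insert_of_notMem h1notin]
  have hfib : ∀ x ∈ Ap, (fun x => zpowers x) x ∈ ΩF := by
    intro x hx
    simp only [hAp, Finset.mem_filter, Finset.mem_univ, true_and] at hx
    simp only [hΩF, Finset.mem_filter, Finset.mem_univ, true_and, Nat.card_zpowers, hx]
  have hsum := Finset.card_eq_sum_card_fiberwise hfib
  have hfibcard : ∀ K ∈ ΩF, (Ap.filter (fun x => zpowers x = K)).card = p - 1 := by
    intro K hK
    simp only [hΩF, Finset.mem_filter, Finset.mem_univ, true_and] at hK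
    have : Ap.filter (fun x => zpowers x = K) = (Finset.univ.filter (· ∈ K)).erase 1 := by
      ext x
      simp only [hAp, Finset.mem_filter, Finset.mem_univ, true_and, Finset.mem_erase]
      constructor
      · rintro ⟨hord, rfl⟩
        exact ⟨fun h => hp.one_lt.ne (by rw [h, orderOf_one] at hord; exact hord),
          mem_zpowers x⟩
      · rintro ⟨hne, hmem⟩
        have hdvd : orderOf x ∣ p := by
          have h3 := orderOf_dvd_natCard (⟨x, hmem⟩ : K)
          rwa [Subgroup.orderOf_mk, hK] at h3
        have hord : orderOf x = p :=
          ((Nat.dvd_prime hp).mp hdvd).resolve_left (fun h => hne (orderOf_eq_one_iff.mp h))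
        refine ⟨hord, ?_⟩
        apply Subgroup.eq_of_le_of_card_ge ((zpowers_le).mpr hmem)
        rw [hK, Nat.card_zpowers, hord]
    rw [this, Finset.card_erase_of_mem (by simp [K.one_mem]), ← Fintype.card_subtype]
    have : Fintype.card {x // x ∈ K} = p := by rw [← Nat.card_eq_fintype_card]; exact hK
    rw [this]
  have htotal : Ap.card = ΩF.card * (p - 1) := by
    rw [hsum, Finset.sum_congr rfl hfibcard, Finset.sum_const, smul_eq_mul]
  have hA1card' : Nat.card {x : H // x ^ p = 1} = A1.card := by
    rw [Nat.card_eq_fintype_card, Fintype.card_subtype]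
  have hΩcard : Nat.card {K : Subgroup H // Nat.card K = p} = ΩF.card := by
    rw [Nat.card_eq_fintype_card, Fintype.card_subtype]
  have hmod := card_pow_eq_one_modEq hp hd
  rw [hA1card', hA1card, htotal] at hmod
  rw [hΩcard]
  have hp1 : (1 : ℕ) ≤ p := hp.pos
  rw [← ZMod.natCast_eq_natCast_iff] at hmod ⊢
  push_cast at hmod ⊢
  rw [Nat.cast_sub hp1] at hmod
  push_cast at hmod
  have : (p : ZMod p) = 0 := ZMod.natCast_self p
  rw [this] at hmod
  ring_nf at hmod
  linear_combination -hmod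

end Helpers
section Part2

variable {p : ℕ}

/-- A subgroup containing the center with prime relative index is commutative. -/
theorem isComm_of_center_relindex_prime (hp : p.Prime) {G : Type*} [Group G] [Finite G]
    {T : Subgroup G} (_hle : Subgroup.center G ≤ T)
    (hrel : (Subgroup.center G).relIndex T = p) : IsMulCommutative T := by
  haveI : Fact p.Prime := ⟨hp⟩
  set f := (QuotientGroup.mk' (Subgroup.center G)).domRestrict T with hf
  have hker : f.ker = (Subgroup.center G).subgroupOf T := by
    rw [hf, MonoidHom.ker_restrict, QuotientGroup.ker_mk']
  have hcard : Nat.card f.range = p := by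
    have := Nat.card_congr (QuotientGroup.quotientKerEquivRange f).toEquiv
    rw [hker] at this
    rw [← this, ← Subgroup.index_eq_card]
    exact hrel
  haveI : IsCyclic f.range := isCyclic_of_prime_card hcard
  have hker' : f.rangeRestrict.ker ≤ Subgroup.center T := by
    rw [MonoidHom.ker_rangeRestrict, hker]
    rintro ⟨x, hxT⟩ hx
    rw [Subgroup.mem_subgroupOf] at hx
    rw [Subgroup.mem_center_iff]
    rintro ⟨g, hgT⟩
    exact Subtype.ext (Subgroup.mem_center_iff.mp hx g)
  constructor
  constructor
  intro a b
  exact commutative_of_cyclic_center_quotient f.rangeRestrict hker' a b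

/-- Counting subgroups of prime relative index over a normal subgroup via the quotient. -/
theorem card_relindex_eq_card_quot (hp : p.Prime) {G : Type*} [Group G] [Finite G]
    (N : Subgroup G) [N.Normal] :
    Nat.card {T : Subgroup G // N < T ∧ N.relIndex T = p} =
      Nat.card {K : Subgroup (G ⧸ N) // Nat.card K = p} := by
  have hcard : ∀ T : Subgroup G, N ≤ T →
      Nat.card (T.map (QuotientGroup.mk' N)) = N.relIndex T := by
    intro T hT
    set f := (QuotientGroup.mk' N).domRestrict T with hf
    have hrange : f.range = T.map (QuotientGroup.mk' N) := MonoidHom.restrict_range T _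
    have hker : f.ker = N.subgroupOf T := by
      rw [hf, MonoidHom.ker_restrict, QuotientGroup.ker_mk']
    rw [← hrange]
    have := Nat.card_congr (QuotientGroup.quotientKerEquivRange f).toEquiv
    rw [hker] at this
    rw [← this, ← Subgroup.index_eq_card]
    rfl
  have hNle : ∀ K : Subgroup (G ⧸ N), N ≤ K.comap (QuotientGroup.mk' N) := by
    intro K x hx
    have : ((QuotientGroup.mk' N) x) = 1 := by
      rw [← MonoidHom.mem_ker, QuotientGroup.ker_mk']; exact hx
    rw [Subgroup.mem_comap, this]
    exact K.one_mem
  apply Nat.card_congr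
  refine
    { toFun := fun T => ⟨T.1.map (QuotientGroup.mk' N), by
        rw [hcard T.1 T.2.1.le]; exact T.2.2⟩
      invFun := fun K => ⟨K.1.comap (QuotientGroup.mk' N), ?_, ?_⟩
      left_inv := ?_
      right_inv := ?_ }
  · -- N < comap
    refine lt_of_le_of_ne (hNle K.1) (fun h => ?_)
    have hmap : (K.1.comap (QuotientGroup.mk' N)).map (QuotientGroup.mk' N) = K.1 :=
      Subgroup.map_comap_eq_self_of_surjective (QuotientGroup.mk'_surjective N) K.1
    rw [← h] at hmap
    have : K.1 = ⊥ := by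
      rw [← hmap, Subgroup.map_eq_bot_iff, QuotientGroup.ker_mk']
    have hK2 := K.2
    rw [this, Subgroup.card_bot] at hK2
    exact hp.one_lt.ne hK2
  · -- relindex
    have hmap : (K.1.comap (QuotientGroup.mk' N)).map (QuotientGroup.mk' N) = K.1 :=
      Subgroup.map_comap_eq_self_of_surjective (QuotientGroup.mk'_surjective N) K.1
    rw [← hcard _ (hNle K.1), hmap]
    exact K.2
  · rintro ⟨T, hT1, hT2⟩
    apply Subtype.ext
    show (T.map (QuotientGroup.mk' N)).comap (QuotientGroup.mk' N) = T
    rw [Subgroup.comap_map_eq, QuotientGroup.ker_mk', sup_eq_left.mpr hT1.le]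
  · rintro ⟨K, hK⟩
    apply Subtype.ext
    exact Subgroup.map_comap_eq_self_of_surjective (QuotientGroup.mk'_surjective N) K

end Part2
section Part3

variable {p : ℕ}

/-- Number of subgroups between the center and a strictly larger subgroup `B`,
of prime relative index over the center, is `1` mod `p`. -/
theorem count_intermediate_modEq_one (hp : p.Prime) {G : Type*} [Group G] [Finite G]
    (hG : IsPGroup p G) {B : Subgroup G} (hZB : Subgroup.center G < B) :
    Nat.card {T : Subgroup G // Subgroup.center G < T ∧ T ≤ B ∧
      (Subgroup.center G).relIndex T = p} ≡ 1 [MOD p] := by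
  haveI : Fact p.Prime := ⟨hp⟩
  set Z := Subgroup.center G with hZdef
  set Z' := Z.subgroupOf B with hZ'def
  haveI : Z'.Normal := by
    constructor
    intro z hz a
    rw [Subgroup.mem_subgroupOf] at hz ⊢
    have h2 : ((a * z * a⁻¹ : B) : G) = (z : G) := by
      push_cast
      rw [Subgroup.mem_center_iff.mp hz (a : G), mul_assoc, mul_inv_cancel, mul_one]
    rw [h2]
    exact hz
  have hmapZ' : Z'.map B.subtype = Z := by
    rw [hZ'def, Subgroup.subgroupOf_map_subtype, inf_eq_left]
    exact hZB.le
  have e : {T : Subgroup G // Z < T ∧ T ≤ B ∧ Z.relIndex T = p} ≃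
      {S : Subgroup B // Z' < S ∧ Z'.relIndex S = p} :=
  { toFun := fun T => ⟨T.1.subgroupOf B, by
      rcases T.2 with ⟨h1, h2, h3⟩
      constructor
      · refine lt_of_le_of_ne (Subgroup.comap_mono h1.le) (fun h => ?_)
        have : Z = T.1 :=
          calc Z = Z'.map B.subtype := hmapZ'.symm
          _ = (T.1.subgroupOf B).map B.subtype := by rw [h]
          _ = T.1 ⊓ B := Subgroup.subgroupOf_map_subtype _ _
          _ = T.1 := inf_eq_left.mpr h2
        exact h1.ne this
      · show (Z.subgroupOf B).relIndex (T.1.subgroupOf B) = p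
        rw [Subgroup.relIndex_subgroupOf h2]; exact h3⟩
    invFun := fun S => ⟨S.1.map B.subtype, by
      rcases S.2 with ⟨h1, h2⟩
      have hle : S.1.map B.subtype ≤ B := by
        rintro x ⟨y, hy, rfl⟩; exact y.2
      refine ⟨?_, hle, ?_⟩
      · rw [← hmapZ']
        refine lt_of_le_of_ne (Subgroup.map_mono h1.le) (fun h => ?_)
        exact h1.ne (Subgroup.map_injective B.subtype_injective h)
      · show Z.relIndex (S.1.map B.subtype) = p
        rw [← Subgroup.relIndex_subgroupOf hle]
        simp only [Subgroup.subgroupOf]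
        rw [Subgroup.comap_map_eq_self_of_injective B.subtype_injective]
        exact h2⟩
    left_inv := fun T => by
      apply Subtype.ext
      show (T.1.subgroupOf B).map B.subtype = T.1
      rw [Subgroup.subgroupOf_map_subtype, inf_eq_left.mpr T.2.2.1]
    right_inv := fun S => by
      apply Subtype.ext
      exact Subgroup.comap_map_eq_self_of_injective B.subtype_injective S.1 }
  rw [Nat.card_congr e, card_relindex_eq_card_quot hp Z']
  apply card_subgroup_prime_modEq_one hp
  have hpg : IsPGroup p (B ⧸ Z') := ((hG.to_subgroup B).to_quotient Z')
  obtain ⟨n, hn⟩ := IsPGroup.iff_card.mp hpg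
  have hne : Z' ≠ ⊤ := by
    show Z.subgroupOf B ≠ ⊤
    rw [Ne, Subgroup.subgroupOf_eq_top]
    exact fun h => hZB.not_ge h
  have : Nat.card (B ⧸ Z') ≠ 1 := by
    rw [← Subgroup.index_eq_card]
    exact fun h => hne (Subgroup.index_eq_one.mp h)
  rw [hn]
  rw [hn] at this
  rcases Nat.eq_zero_or_pos n with rfl | hn0
  · simp at this
  · exact dvd_pow_self p hn0.ne'

end Part3
section Part4

/-- Maximal commutative subgroups containing a commutative subgroup `T` correspond to
maximal commutative subgroups of the centralizer of `T`. -/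
theorem card_maximal_containing_eq {G : Type*} [Group G] {T : Subgroup G}
    (hT : IsMulCommutative T) :
    Nat.card {A : Subgroup G // Maximal (fun H : Subgroup _ => IsMulCommutative H) A ∧ T ≤ A} =
      Nat.card {A' : Subgroup (Subgroup.centralizer (T : Set G)) //
        Maximal (fun H : Subgroup _ => IsMulCommutative H) A'} := by
  set C := Subgroup.centralizer (T : Set G) with hC
  have hTC : T ≤ C := Subgroup.le_centralizer_iff_isMulCommutative.mpr hT
  -- elements of T are central in C
  have hTcent : T.subgroupOf C ≤ Subgroup.center C := by
    rintro ⟨x, hxC⟩ hx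
    rw [Subgroup.mem_subgroupOf] at hx
    rw [Subgroup.mem_center_iff]
    rintro ⟨c, hc⟩
    exact Subtype.ext (Subgroup.mem_centralizer_iff.mp hc x hx).symm
  have hAC : ∀ {A : Subgroup G}, IsMulCommutative A → T ≤ A → A ≤ C := by
    intro A hA hTA
    refine (Subgroup.le_centralizer_iff_isMulCommutative.mpr hA).trans ?_
    exact Subgroup.centralizer_le (SetLike.coe_subset_coe.mpr hTA)
  have hmapsub : ∀ {A : Subgroup G}, A ≤ C → (A.subgroupOf C).map C.subtype = A := by
    intro A h
    rw [Subgroup.subgroupOf_map_subtype, inf_eq_left.mpr h]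
  have hsubmap : ∀ (S : Subgroup C), (S.map C.subtype).subgroupOf C = S := by
    intro S
    exact Subgroup.comap_map_eq_self_of_injective C.subtype_injective S
  have hmaple : ∀ (S : Subgroup C), S.map C.subtype ≤ C := by
    rintro S x ⟨y, hy, rfl⟩; exact y.2
  apply Nat.card_congr
  refine
    { toFun := fun A => ⟨A.1.subgroupOf C, ?_, ?_⟩
      invFun := fun A' => ⟨A'.1.map C.subtype, ⟨?_, ?_⟩, ?_⟩
      left_inv := ?_
      right_inv := ?_ }
  · -- subgroupOf is commutative
    haveI := A.2.1.1
    exact inferInstance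
  · -- maximality of subgroupOf
    intro B' hB' hle
    have hAC' : A.1 ≤ C := hAC A.2.1.1 A.2.2
    have h1 : A.1 ≤ B'.map C.subtype :=
      calc A.1 = (A.1.subgroupOf C).map C.subtype := (hmapsub hAC').symm
      _ ≤ B'.map C.subtype := Subgroup.map_mono hle
    haveI := hB'
    have h2 : B'.map C.subtype ≤ A.1 := A.2.1.2 inferInstance h1
    calc B' = (B'.map C.subtype).subgroupOf C := (hsubmap B').symm
    _ ≤ A.1.subgroupOf C := Subgroup.comap_mono h2
  · -- map is commutative
    haveI := A'.2.1
    exact inferInstance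
  · -- maximality of map
    intro B hB hle
    have hTA : T ≤ A'.1.map C.subtype := by
      intro x hx
      have hx' : (⟨x, hTC hx⟩ : C) ∈ A'.1 :=
        center_le_of_maximal_isComm A'.2 (hTcent (by rwa [Subgroup.mem_subgroupOf]))
      exact ⟨⟨x, hTC hx⟩, hx', rfl⟩
    have hBC : B ≤ C := hAC hB (hTA.trans hle)
    haveI := hB
    have h1 : A'.1 ≤ B.subgroupOf C := by
      rw [← hsubmap A'.1]
      exact Subgroup.comap_mono hle
    have h2 : B.subgroupOf C ≤ A'.1 := A'.2.2 inferInstance h1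
    calc B = (B.subgroupOf C).map C.subtype := (hmapsub hBC).symm
    _ ≤ A'.1.map C.subtype := Subgroup.map_mono h2
  · -- T ≤ map
    intro x hx
    have hx' : (⟨x, hTC hx⟩ : C) ∈ A'.1 :=
      center_le_of_maximal_isComm A'.2 (hTcent (by rwa [Subgroup.mem_subgroupOf]))
    exact ⟨⟨x, hTC hx⟩, hx', rfl⟩
  · rintro ⟨A, hA⟩
    exact Subtype.ext (hmapsub (hAC hA.1.1 hA.2))
  · rintro ⟨A', hA'⟩
    exact Subtype.ext (hsubmap A')

end Part4
section Part5

variable {p : ℕ}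

theorem modeq_one_cast {n : ℕ} (h : n ≡ 1 [MOD p]) : ((n : ZMod p)) = 1 := by
  rw [← Nat.cast_one, ZMod.natCast_eq_natCast_iff]
  exact h

theorem key_count (hp : p.Prime) {G : Type*} [Group G] [Finite G] (hG : IsPGroup p G)
    (hZ : ¬ Maximal (fun H : Subgroup _ => IsMulCommutative H) (Subgroup.center G))
    (IH : ∀ C : Subgroup G, C ≠ ⊤ →
      Nat.card {A : Subgroup C // Maximal (fun H : Subgroup _ => IsMulCommutative H) A} ≡ 1 [MOD p]) :
    Nat.card {A : Subgroup G // Maximal (fun H : Subgroup _ => IsMulCommutative H) A} ≡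
      Nat.card {T : Subgroup G // IsMulCommutative T ∧ Subgroup.center G < T ∧
        (Subgroup.center G).relIndex T = p} [MOD p] := by
  classical
  haveI : Fintype (Subgroup G) := Fintype.ofFinite _
  set AP : Subgroup G → Prop := fun A => Maximal (fun H : Subgroup _ => IsMulCommutative H) A with hAP
  set TP : Subgroup G → Prop := fun T => IsMulCommutative T ∧ Subgroup.center G < T ∧
    (Subgroup.center G).relIndex T = p with hTP
  set AF : Finset (Subgroup G) := Finset.univ.filter AP with hAF
  set TF : Finset (Subgroup G) := Finset.univ.filter TP with hTF
  have hcA : Nat.card {A : Subgroup G // AP A} = AF.card := by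
    rw [Nat.card_eq_fintype_card, hAF, Fintype.card_subtype]
  have hcT : Nat.card {T : Subgroup G // TP T} = TF.card := by
    rw [Nat.card_eq_fintype_card, hTF, Fintype.card_subtype]
  show Nat.card {A : Subgroup G // AP A} ≡ Nat.card {T : Subgroup G // TP T} [MOD p]
  rw [hcA, hcT, ← ZMod.natCast_eq_natCast_iff]
  have perA : ∀ A ∈ AF, ((TF.filter (fun T => T ≤ A)).card : ZMod p) = 1 := by
    intro A hA
    rw [hAF, Finset.mem_filter] at hA
    have hA' : AP A := hA.2
    have hZA : Subgroup.center G < A := by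
      refine lt_of_le_of_ne (center_le_of_maximal_isComm hA') (fun h => hZ ?_)
      rw [h]; exact hA'
    have hcount : (TF.filter (fun T => T ≤ A)).card =
        Nat.card {T : Subgroup G // Subgroup.center G < T ∧ T ≤ A ∧
          (Subgroup.center G).relIndex T = p} := by
      rw [hTF, Finset.filter_filter, Nat.card_eq_fintype_card]
      rw [← Fintype.card_subtype]
      apply Fintype.card_congr
      apply Equiv.subtypeEquivRight
      intro T
      constructor
      · rintro ⟨⟨hc, hlt, hrel⟩, hle⟩; exact ⟨hlt, hle, hrel⟩
      · rintro ⟨hlt, hle, hrel⟩; exact ⟨⟨isComm_of_le hle hA'.1, hlt, hrel⟩, hle⟩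
    rw [hcount]
    exact modeq_one_cast (count_intermediate_modEq_one hp hG hZA)
  have perT : ∀ T ∈ TF, ((AF.filter (fun A => T ≤ A)).card : ZMod p) = 1 := by
    intro T hT
    rw [hTF, Finset.mem_filter] at hT
    obtain ⟨-, hTc, hTlt, -⟩ := hT
    have hC : Subgroup.centralizer (T : Set G) ≠ ⊤ := by
      rw [Ne, Subgroup.centralizer_eq_top_iff_subset]
      exact fun h => hTlt.not_ge (fun x hx => h hx)
    have hcount : (AF.filter (fun A => T ≤ A)).card =
        Nat.card {A : Subgroup G // AP A ∧ T ≤ A} := by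
      rw [hAF, Finset.filter_filter, Nat.card_eq_fintype_card, ← Fintype.card_subtype]
    rw [hcount, card_maximal_containing_eq hTc]
    exact modeq_one_cast (IH _ hC)
  calc (AF.card : ZMod p)
      = ∑ _A ∈ AF, (1 : ZMod p) := by rw [Finset.sum_const, nsmul_eq_mul, mul_one]
    _ = ∑ A ∈ AF, ((TF.filter (fun T => T ≤ A)).card : ZMod p) :=
        (Finset.sum_congr rfl (fun A hA => (perA A hA).symm))
    _ = ∑ A ∈ AF, ∑ T ∈ TF, (if T ≤ A then (1 : ZMod p) else 0) := by
        refine Finset.sum_congr rfl fun A _ => ?_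
        rw [Finset.card_filter]
        push_cast
        rfl
    _ = ∑ T ∈ TF, ∑ A ∈ AF, (if T ≤ A then (1 : ZMod p) else 0) := Finset.sum_comm
    _ = ∑ T ∈ TF, ((AF.filter (fun A => T ≤ A)).card : ZMod p) := by
        refine Finset.sum_congr rfl fun T _ => ?_
        rw [Finset.card_filter]
        push_cast
        rfl
    _ = ∑ _T ∈ TF, (1 : ZMod p) := Finset.sum_congr rfl perT
    _ = (TF.card : ZMod p) := by rw [Finset.sum_const, nsmul_eq_mul, mul_one]

end Part5
section Part6

universe u

variable {p : ℕ}

theorem card_maximal_comm_modEq_one (hp : p.Prime) :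
    ∀ (n : ℕ) (G : Type u) [Group G] [Finite G], Nat.card G ≤ n → IsPGroup p G →
      Nat.card {A : Subgroup G // Maximal (fun H : Subgroup _ => IsMulCommutative H) A} ≡ 1 [MOD p] := by
  intro n
  induction n with
  | zero =>
    intro G _ _ hle _
    have := Nat.card_pos (α := G)
    omega
  | succ n ih =>
    intro G _ _ hle hG
    haveI : Fact p.Prime := ⟨hp⟩
    by_cases hZ : Maximal (fun H : Subgroup _ => IsMulCommutative H) (Subgroup.center G)
    · have h1 : Nat.card {A : Subgroup G // Maximal (fun H : Subgroup _ => IsMulCommutative H) A} = 1 := by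
        rw [Nat.card_eq_one_iff_unique]
        constructor
        · constructor
          rintro ⟨A, hA⟩ ⟨B, hB⟩
          have hA' : A = Subgroup.center G :=
            le_antisymm (hZ.2 hA.1 (center_le_of_maximal_isComm hA))
              (center_le_of_maximal_isComm hA)
          have hB' : B = Subgroup.center G :=
            le_antisymm (hZ.2 hB.1 (center_le_of_maximal_isComm hB))
              (center_le_of_maximal_isComm hB)
          exact Subtype.ext (hA'.trans hB'.symm)
        · exact ⟨⟨Subgroup.center G, hZ⟩⟩
      rw [h1]
    · have IH' : ∀ C : Subgroup G, C ≠ ⊤ →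
          Nat.card {A : Subgroup C // Maximal (fun H : Subgroup _ => IsMulCommutative H) A} ≡ 1 [MOD p] := by
        intro C hC
        have hcard : Nat.card C < Nat.card G := by
          have h1 : Nat.card G = Nat.card (G ⧸ C) * Nat.card C :=
            Subgroup.card_eq_card_quotient_mul_card_subgroup C
          have h2 : Nat.card (G ⧸ C) ≠ 1 := by
            rw [← Subgroup.index_eq_card]
            exact fun h => hC (Subgroup.index_eq_one.mp h)
          have h3 : 0 < Nat.card (G ⧸ C) := Nat.card_pos
          have h4 : 0 < Nat.card C := Nat.card_pos
          have h5 : 2 ≤ Nat.card (G ⧸ C) := by omega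
          have h6 := Nat.mul_le_mul_right (Nat.card C) h5
          omega
        exact ih C (by omega) (hG.to_subgroup C)
      refine (key_count hp hG hZ IH').trans ?_
      -- count of T's is ≡ 1
      have hZtop : Subgroup.center G ≠ ⊤ := by
        intro h
        apply hZ
        constructor
        · exact inferInstance
        · intro B _ _
          rw [h]; exact le_top
      have e : {T : Subgroup G // IsMulCommutative T ∧ Subgroup.center G < T ∧
            (Subgroup.center G).relIndex T = p} ≃
          {T : Subgroup G // Subgroup.center G < T ∧ (Subgroup.center G).relIndex T = p} :=
        Equiv.subtypeEquivRight (fun T => ⟨fun ⟨_, h2, h3⟩ => ⟨h2, h3⟩,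
          fun ⟨h2, h3⟩ => ⟨isComm_of_center_relindex_prime hp h2.le h3, h2, h3⟩⟩)
      rw [Nat.card_congr e, card_relindex_eq_card_quot hp (Subgroup.center G)]
      apply card_subgroup_prime_modEq_one hp
      obtain ⟨k, hk⟩ := IsPGroup.iff_card.mp (hG.to_quotient (Subgroup.center G))
      have h2 : Nat.card (G ⧸ Subgroup.center G) ≠ 1 := by
        rw [← Subgroup.index_eq_card]
        exact fun h => hZtop (Subgroup.index_eq_one.mp h)
      rw [hk] at h2 ⊢
      rcases Nat.eq_zero_or_pos k with rfl | hk0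
      · simp at h2
      · exact dvd_pow_self p hk0.ne'

end Part6

theorem maximal_abelian_count_congr_index_p {p : ℕ} (hp : p.Prime) {G : Type*} [Group G]
    [Finite G] (hG : IsPGroup p G)
    (hZ : ¬ Maximal (fun H : Subgroup G => IsMulCommutative H) (Subgroup.center G)) :
    Nat.card {A : Subgroup G // Maximal (fun H : Subgroup G => IsMulCommutative H) A} ≡
      Nat.card {T : Subgroup G // IsMulCommutative T ∧ Subgroup.center G < T ∧
        (Subgroup.center G).relIndex T = p} [MOD p] := by
  exact key_count hp hG hZ (fun C _ =>
    card_maximal_comm_modEq_one hp (Nat.card C) C le_rfl (hG.to_subgroup C))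
end

section
/- Let G be a finite p-group. For every abelian subgroup H of G, the number of maximal abelian subgroups of G containing H, reduced modulo p, equals 1; in particular this number is non-zero, so every abelian subgroup of G is contained in at least one maximal abelian subgroup, and if H is contained in a unique maximal abelian subgroup then that count is exactly 1. -/
open Subgroup

variable {p : ℕ}

private lemma card_compl_one {W : Type*} [Group W] [Finite W] :
    Nat.card {a : W // a ≠ 1} = Nat.card W - 1 := by
  classical
  have := Fintype.ofFinite W
  rw [Nat.card_eq_fintype_card, Nat.card_eq_fintype_card]
  have h1 : Fintype.card {a : W // a = 1} = 1 := Fintype.card_subtype_eq 1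
  have := Fintype.card_subtype_compl (fun a : W => a = 1)
  rw [h1] at this
  exact this

/-- correspondence: subgroups of G of card n contained in C ↔ subgroups of C of card n -/
private noncomputable def subgroupsCardLeEquiv {G : Type*} [Group G] (C : Subgroup G) (n : ℕ) :
    {A : Subgroup G // Nat.card A = n ∧ A ≤ C} ≃ {B : Subgroup ↥C // Nat.card B = n} := by
  refine Equiv.mk
    (fun A => ⟨A.1.subgroupOf C, by
      rw [Nat.card_congr (Subgroup.subgroupOfEquivOfLe A.2.2).toEquiv]; exact A.2.1⟩)
    (fun B => ⟨B.1.map C.subtype, ⟨by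
      rw [← Nat.card_congr (Subgroup.equivMapOfInjective B.1 C.subtype C.subtype_injective).toEquiv]
      exact B.2, Subgroup.map_subtype_le B.1⟩⟩)
    (fun A => ?_) (fun B => ?_)
  · ext1
    simp only [Subgroup.subgroupOf_map_subtype]
    exact inf_eq_left.mpr A.2.2
  · ext1
    exact Subgroup.comap_map_eq_self_of_injective C.subtype_injective B.1

private lemma count_orderP_abelian (hp : p.Prime) (Z : Type*) [CommGroup Z] [Finite Z]
    [Nontrivial Z] (hZ : IsPGroup p Z) :
    (Nat.card {A : Subgroup Z // Nat.card A = p} : ZMod p) = 1 := by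
  classical
  haveI := Fact.mk hp
  set E : Subgroup Z :=
    { carrier := {x | x ^ p = 1}
      one_mem' := one_pow p
      mul_mem' := fun {a b} ha hb => by
        simp only [Set.mem_setOf_eq] at *
        rw [mul_pow, ha, hb, one_mul]
      inv_mem' := fun {a} ha => by
        simp only [Set.mem_setOf_eq] at *
        rw [inv_pow, ha, inv_one] } with hEdef
  obtain ⟨d, hd⟩ := IsPGroup.iff_card.mp (hZ.to_subgroup E)
  have := Fintype.ofFinite Z
  obtain ⟨n, hn0, hn⟩ := hZ.nontrivial_iff_card.mp inferInstance
  have hdvd : p ∣ Fintype.card Z := by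
    rw [← Nat.card_eq_fintype_card, hn]; exact dvd_pow_self p hn0.ne'
  obtain ⟨g, hg⟩ := exists_prime_orderOf_dvd_card p hdvd
  have hgE : g ∈ E := by
    show g ^ p = 1
    rw [← hg]; exact pow_orderOf_eq_one g
  have hgne : g ≠ 1 := by
    intro h; rw [h, orderOf_one] at hg; exact hp.one_lt.ne' hg.symm
  have key : ∀ A : Subgroup Z, Nat.card A = p → ∀ a : Z, a ∈ A → a ≠ 1 →
      orderOf a = p ∧ Subgroup.zpowers a = A := by
    intro A hA a haA hane
    have h1 : orderOf a ∣ p := by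
      have h2 := orderOf_dvd_natCard (⟨a, haA⟩ : A)
      rw [hA] at h2
      exact (orderOf_injective A.subtype A.subtype_injective ⟨a, haA⟩) ▸ h2
    have h3 : orderOf a = p := by
      rcases (Nat.dvd_prime hp).mp h1 with h | h
      · exact absurd (orderOf_eq_one_iff.mp h) hane
      · exact h
    refine ⟨h3, Subgroup.eq_of_le_of_card_ge (Subgroup.zpowers_le.mpr haA) ?_⟩
    rw [Nat.card_zpowers, h3, hA]
  set T := {A : Subgroup Z // Nat.card A = p} with hT
  have e2 : {x : Z // orderOf x = p} ≃ {s : T × Z // s.2 ∈ s.1.1 ∧ s.2 ≠ 1} :=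
    { toFun := fun x => ⟨(⟨Subgroup.zpowers x.1, by rw [Nat.card_zpowers]; exact x.2⟩, x.1),
        ⟨Subgroup.mem_zpowers x.1, fun h => by
          have h' : (x : Z) = 1 := h
          have hx2 := x.2
          rw [h', orderOf_one] at hx2
          exact hp.one_lt.ne' hx2.symm⟩⟩
      invFun := fun s => ⟨s.1.2, (key s.1.1.1 s.1.1.2 s.1.2 s.2.1 s.2.2).1⟩
      left_inv := fun x => rfl
      right_inv := by
        rintro ⟨⟨A, z⟩, hz, hne⟩
        exact Subtype.ext (Prod.ext (Subtype.ext (key A.1 A.2 z hz hne).2) rfl) }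
  have e3 : {s : T × Z // s.2 ∈ s.1.1 ∧ s.2 ≠ 1} ≃ Σ A : T, {z : Z // z ∈ A.1 ∧ z ≠ 1} :=
    { toFun := fun s => ⟨s.1.1, s.1.2, s.2⟩
      invFun := fun t => ⟨(t.1, t.2.1), t.2.2⟩
      left_inv := fun s => rfl
      right_inv := fun t => rfl }
  have efib : ∀ A : T, {z : Z // z ∈ A.1 ∧ z ≠ 1} ≃ {a : ↥A.1 // a ≠ 1} := fun A =>
    { toFun := fun z => ⟨⟨z.1, z.2.1⟩, fun h => z.2.2 (Subtype.ext_iff.mp h)⟩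
      invFun := fun a => ⟨a.1.1, a.1.2, fun h => a.2 (Subtype.ext h)⟩
      left_inv := fun z => rfl
      right_inv := fun a => rfl }
  have hd0 : d ≠ 0 := by
    intro h0
    rw [h0, pow_zero] at hd
    obtain ⟨x, hx⟩ := Nat.card_eq_one_iff_exists.mp hd
    exact hgne (Subtype.ext_iff.mp ((hx ⟨g, hgE⟩).trans (hx 1).symm))
  have hcard2 : Nat.card {x : Z // orderOf x = p} = p ^ d - 1 := by
    have e1 : {x : Z // orderOf x = p} ≃ {x : ↥E // x ≠ 1} :=
      { toFun := fun x => ⟨⟨x.1, by have h0 := pow_orderOf_eq_one (x.1); rwa [x.2] at h0⟩,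
          fun h => by
            have hx1 : x.1 = 1 := Subtype.ext_iff.mp h
            have hx2 := x.2
            rw [hx1, orderOf_one] at hx2
            exact hp.one_lt.ne' hx2.symm⟩
        invFun := fun y => ⟨y.1.1, by
          have h1 : orderOf y.1.1 ∣ p := orderOf_dvd_of_pow_eq_one y.1.2
          rcases (Nat.dvd_prime hp).mp h1 with h | h
          · exact absurd (Subtype.ext (orderOf_eq_one_iff.mp h)) y.2
          · exact h⟩
        left_inv := fun x => rfl
        right_inv := fun y => rfl }
    rw [Nat.card_congr e1, card_compl_one, hd]
  have hcard1 : Nat.card {x : Z // orderOf x = p} = Nat.card T * (p - 1) := by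
    rw [Nat.card_congr (e2.trans e3)]
    haveI : Fintype T := Fintype.ofFinite _
    haveI : ∀ A : T, Fintype {z : Z // z ∈ A.1 ∧ z ≠ 1} := fun A => Fintype.ofFinite _
    rw [Nat.card_eq_fintype_card, Fintype.card_sigma]
    have hfib : ∀ A : T, Fintype.card {z : Z // z ∈ A.1 ∧ z ≠ 1} = p - 1 := by
      intro A
      rw [← Nat.card_eq_fintype_card, Nat.card_congr (efib A), card_compl_one, A.2]
    calc ∑ A : T, Fintype.card {z : Z // z ∈ A.1 ∧ z ≠ 1} = ∑ _A : T, (p - 1) :=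
          Finset.sum_congr rfl (fun A _ => hfib A)
      _ = Nat.card T * (p - 1) := by
          rw [Finset.sum_const, smul_eq_mul, Finset.card_univ, Nat.card_eq_fintype_card]
  have heq : Nat.card T * (p - 1) = p ^ d - 1 := hcard1.symm.trans hcard2
  have hcast := congrArg (Nat.cast : ℕ → ZMod p) heq
  rw [Nat.cast_mul, Nat.cast_sub hp.one_le, Nat.cast_sub (Nat.one_le_pow d p hp.pos),
    Nat.cast_pow, Nat.cast_one, ZMod.natCast_self, zero_pow hd0, zero_sub, mul_neg_one,
    neg_inj] at hcast
  exact hcast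

open Pointwise in
private lemma count_orderP (hp : p.Prime) (Q : Type*) [Group Q] [Finite Q]
    [Nontrivial Q] (hQ : IsPGroup p Q) :
    (Nat.card {A : Subgroup Q // Nat.card A = p} : ZMod p) = 1 := by
  classical
  haveI := Fact.mk hp
  have hsmul_card : ∀ (g : ConjAct Q) (A : Subgroup Q),
      Nat.card (g • A : Subgroup Q) = Nat.card A :=
    fun g A => (Nat.card_congr (Subgroup.equivSMul g A).toEquiv).symm
  letI : MulAction (ConjAct Q) {A : Subgroup Q // Nat.card A = p} :=
    { smul := fun g A => ⟨g • A.1, by rw [hsmul_card]; exact A.2⟩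
      one_smul := fun A => Subtype.ext (one_smul _ A.1)
      mul_smul := fun g h A => Subtype.ext (mul_smul g h A.1) }
  have hPC : IsPGroup p (ConjAct Q) := hQ.of_equiv ConjAct.toConjAct
  have hmod := hPC.card_modEq_card_fixedPoints {A : Subgroup Q // Nat.card A = p}
  have hfixiff : ∀ A : {A : Subgroup Q // Nat.card A = p},
      A ∈ MulAction.fixedPoints (ConjAct Q) {A : Subgroup Q // Nat.card A = p} ↔ A.1.Normal := by
    intro A
    constructor
    · intro hA
      constructor
      intro n hn g
      have h1 : ConjAct.toConjAct g • A.1 = A.1 :=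
        Subtype.ext_iff.mp (hA (ConjAct.toConjAct g))
      have h2 := Subgroup.smul_mem_pointwise_smul n (ConjAct.toConjAct g) A.1 hn
      rw [h1] at h2
      rwa [ConjAct.smul_def, ConjAct.ofConjAct_toConjAct] at h2
    · intro hA g
      exact Subtype.ext (hA.conjAct g)
  have hcentral : ∀ A : Subgroup Q, Nat.card A = p → A.Normal → A ≤ Subgroup.center Q := by
    intro A hA hN
    letI : MulAction Q ↥A :=
      { smul := fun g a => ⟨g * a.1 * g⁻¹, hN.conj_mem a.1 a.2 g⟩
        one_smul := fun a => by
          apply Subtype.ext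
          show 1 * a.1 * 1⁻¹ = a.1
          group
        mul_smul := fun g h a => by
          apply Subtype.ext
          show g * h * a.1 * (g * h)⁻¹ = g * (h * a.1 * h⁻¹) * g⁻¹
          group }
    have smuldef : ∀ (g : Q) (a : ↥A), (g • a).1 = g * a.1 * g⁻¹ := fun _ _ => rfl
    have h1 := hQ.card_modEq_card_fixedPoints ↥A
    rw [hA] at h1
    have hone : (1 : ↥A) ∈ MulAction.fixedPoints Q ↥A := by
      intro g
      exact Subtype.ext (by simp [smuldef])
    haveI : Nonempty ↥(MulAction.fixedPoints Q ↥A) := ⟨⟨1, hone⟩⟩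
    have hne : Nat.card ↥(MulAction.fixedPoints Q ↥A) ≠ 0 := Nat.card_pos.ne'
    have hdvd2 : p ∣ Nat.card ↥(MulAction.fixedPoints Q ↥A) :=
      Nat.modEq_zero_iff_dvd.mp (h1.symm.trans (Nat.modEq_zero_iff_dvd.mpr dvd_rfl))
    have hle : Nat.card ↥(MulAction.fixedPoints Q ↥A) ≤ p := by
      rw [← hA]
      exact Nat.card_le_card_of_injective Subtype.val Subtype.val_injective
    have hcardfix : Nat.card ↥(MulAction.fixedPoints Q ↥A) = p :=
      le_antisymm hle (Nat.le_of_dvd (Nat.pos_of_ne_zero hne) hdvd2)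
    have huniv : MulAction.fixedPoints Q ↥A = Set.univ := by
      apply Set.eq_of_subset_of_ncard_le (Set.subset_univ _)
      rw [Set.ncard_univ, ← Nat.card_coe_set_eq, hcardfix, hA]
    intro a ha
    rw [Subgroup.mem_center_iff]
    intro g
    have hmem : (⟨a, ha⟩ : ↥A) ∈ MulAction.fixedPoints Q ↥A := huniv ▸ Set.mem_univ _
    have := Subtype.ext_iff.mp (hmem g)
    rw [smuldef] at this
    exact mul_inv_eq_iff_eq_mul.mp this
  have hcenter_normal : ∀ A : Subgroup Q, A ≤ Subgroup.center Q → A.Normal := by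
    intro A hle
    constructor
    intro n hn g
    have := (Subgroup.mem_center_iff.mp (hle hn)) g
    have h2 : g * n * g⁻¹ = n := by rw [this]; group
    rwa [h2]
  have eN : ↥(MulAction.fixedPoints (ConjAct Q) {A : Subgroup Q // Nat.card A = p}) ≃
      {A : Subgroup Q // Nat.card A = p ∧ A ≤ Subgroup.center Q} :=
    { toFun := fun A => ⟨A.1.1, A.1.2, hcentral A.1.1 A.1.2 ((hfixiff A.1).mp A.2)⟩
      invFun := fun B => ⟨⟨B.1, B.2.1⟩, (hfixiff ⟨B.1, B.2.1⟩).mpr (hcenter_normal B.1 B.2.2)⟩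
      left_inv := fun A => rfl
      right_inv := fun B => rfl }
  haveI : Nontrivial ↥(Subgroup.center Q) := hQ.center_nontrivial
  open IsMulCommutative in have hL0 := count_orderP_abelian hp ↥(Subgroup.center Q) (hQ.to_subgroup (Subgroup.center Q))
  have hcast := (ZMod.natCast_eq_natCast_iff _ _ _).mpr hmod
  rw [hcast, Nat.card_congr eN, Nat.card_congr (subgroupsCardLeEquiv (Subgroup.center Q) p)]
  exact hL0

private lemma main_count (hp : p.Prime) {G : Type*} [Group G] [Finite G] (hG : IsPGroup p G) :
    ∀ (n : ℕ) (H : Subgroup G), IsMulCommutative H → H.index ≤ n →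
      (Nat.card {A : Subgroup G // H ≤ A ∧ Maximal (fun B : Subgroup G => IsMulCommutative B) A} : ZMod p) = 1 := by
  intro n
  induction n with
  | zero =>
    intro H _ hle
    exact absurd (Nat.le_zero.mp hle) Subgroup.index_ne_zero_of_finite
  | succ n IH =>
    intro H hH hle
    classical
    haveI := Fact.mk hp
    by_cases hmax : Maximal (fun B : Subgroup G => IsMulCommutative B) H
    · have hiff : ∀ A : Subgroup G, (H ≤ A ∧ Maximal (fun B : Subgroup G => IsMulCommutative B) A) ↔ A = H := by
        intro A
        constructor
        · rintro ⟨h1, h2⟩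
          exact le_antisymm (hmax.2 h2.1 h1) h1
        · rintro rfl
          exact ⟨le_rfl, hmax⟩
      have h1 : Nat.card {A : Subgroup G // H ≤ A ∧ Maximal (fun B : Subgroup G => IsMulCommutative B) A} = 1 := by
        rw [Nat.card_eq_one_iff_exists]
        exact ⟨⟨H, (hiff H).mpr rfl⟩, fun y => Subtype.ext ((hiff y.1).mp y.2)⟩
      rw [h1, Nat.cast_one]
    · haveI := hH
      set C := Subgroup.centralizer (H : Set G) with hCdef
      have hHC : H ≤ C := Subgroup.le_centralizer H
      set H' : Subgroup ↥C := H.subgroupOf C with hH'def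
      have hH'c : ∀ x : ↥C, x ∈ H' → ∀ y : ↥C, x * y = y * x := by
        intro x hx y
        have hxH : (x : G) ∈ H := Subgroup.mem_subgroupOf.mp hx
        exact Subtype.ext ((Subgroup.mem_centralizer_iff.mp y.2) x.1 hxH)
      haveI hH'n : H'.Normal := by
        constructor
        intro x hx g
        have hcomm := hH'c x hx g
        have h1 : g * x * g⁻¹ = x := by rw [← hcomm]; group
        rw [h1]
        exact hx
      set π := QuotientGroup.mk' H' with hπdef
      have hQp : IsPGroup p (↥C ⧸ H') := (hG.to_subgroup C).to_quotient H'
      have hexB : ∃ B : Subgroup G, IsMulCommutative B ∧ H ≤ B ∧ ¬ B ≤ H := by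
        by_contra hcon
        push_neg at hcon
        exact hmax ⟨hH, fun B hB hHB => hcon B hB hHB⟩
      obtain ⟨B, hBcomm, hHB, hBnle⟩ := hexB
      obtain ⟨b, hbB, hbH⟩ := SetLike.not_le_iff_exists.mp hBnle
      have hBC : B ≤ C :=
        (@Subgroup.le_centralizer _ _ B hBcomm).trans
          (Subgroup.centralizer_le (SetLike.coe_subset_coe.mpr hHB))
      haveI : Nontrivial (↥C ⧸ H') := by
        refine ⟨⟨π ⟨b, hBC hbB⟩, 1, fun hcon => ?_⟩⟩
        exact hbH (Subgroup.mem_subgroupOf.mp ((QuotientGroup.eq_one_iff _).mp hcon))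
      have hALEC : ∀ A : Subgroup G, IsMulCommutative A → H ≤ A → A ≤ C := fun A hA h1 =>
        (@Subgroup.le_centralizer _ _ A hA).trans
          (Subgroup.centralizer_le (SetLike.coe_subset_coe.mpr h1))
      set qmap : Subgroup G → Subgroup (↥C ⧸ H') := fun A => (A.subgroupOf C).map π with hqmapdef
      set lift : Subgroup (↥C ⧸ H') → Subgroup G := fun K => (K.comap π).map C.subtype
        with hliftdef
      have hliftH : ∀ K : Subgroup (↥C ⧸ H'), H ≤ lift K := by
        intro K
        have h1 : H' ≤ K.comap π := by
          intro x hx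
          have hx1 : π x = 1 := (QuotientGroup.eq_one_iff x).mpr hx
          show π x ∈ K
          rw [hx1]
          exact K.one_mem
        have h2 : (H'.map C.subtype : Subgroup G) = H := by
          rw [hH'def, Subgroup.subgroupOf_map_subtype]
          exact inf_eq_left.mpr hHC
        calc H = H'.map C.subtype := h2.symm
          _ ≤ lift K := Subgroup.map_mono h1
      have hliftle : ∀ (K : Subgroup (↥C ⧸ H')) (A : Subgroup G), A ≤ C → H ≤ A →
          (K ≤ qmap A ↔ lift K ≤ A) := by
        intro K A hAC hHA
        have hH'A : H' ≤ A.subgroupOf C := fun x hx =>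
          Subgroup.mem_subgroupOf.mpr (hHA (Subgroup.mem_subgroupOf.mp hx))
        constructor
        · intro h
          have h3 := Subgroup.comap_mono (f := π) h
          rw [Subgroup.comap_map_eq, QuotientGroup.ker_mk', sup_eq_left.mpr hH'A] at h3
          calc lift K = (K.comap π).map C.subtype := rfl
            _ ≤ (A.subgroupOf C).map C.subtype := Subgroup.map_mono h3
            _ = A := by rw [Subgroup.subgroupOf_map_subtype]; exact inf_eq_left.mpr hAC
        · intro h
          have h2 : K.comap π ≤ A.subgroupOf C := by
            intro x hx
            have hxK : (x : G) ∈ lift K := Subgroup.mem_map.mpr ⟨x, hx, rfl⟩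
            exact Subgroup.mem_subgroupOf.mpr (h hxK)
          have h3 := Subgroup.map_mono (f := π) h2
          rwa [Subgroup.map_comap_eq_self_of_surjective (QuotientGroup.mk'_surjective H')] at h3
      have hliftcomm : ∀ K : Subgroup (↥C ⧸ H'), Nat.card K = p → IsMulCommutative (lift K) := by
        intro K hK
        haveI : IsCyclic ↥K := isCyclic_of_prime_card hK
        have hKC : lift K ≤ C := Subgroup.map_subtype_le _
        have hmem : ∀ x : ↥(lift K), (π.comp (Subgroup.inclusion hKC)) x ∈ K := by
          intro x
          obtain ⟨c, hc, hcx⟩ := Subgroup.mem_map.mp x.2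
          have hceq : Subgroup.inclusion hKC x = c := Subtype.ext hcx.symm
          show π (Subgroup.inclusion hKC x) ∈ K
          rw [hceq]
          exact hc
        set f : ↥(lift K) →* ↥K := (π.comp (Subgroup.inclusion hKC)).codRestrict K hmem
          with hfdef
        have hker : f.ker ≤ Subgroup.center ↥(lift K) := by
          intro x hx
          have hx1 : π (Subgroup.inclusion hKC x) = 1 := Subtype.ext_iff.mp hx
          have hxH : (x : G) ∈ H :=
            Subgroup.mem_subgroupOf.mp
              ((QuotientGroup.eq_one_iff (Subgroup.inclusion hKC x)).mp hx1)
          rw [Subgroup.mem_center_iff]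
          intro y
          apply Subtype.ext
          show (y : G) * x = x * y
          have hyC : (y : G) ∈ C := hKC y.2
          exact ((Subgroup.mem_centralizer_iff.mp hyC) x.1 hxH).symm
        exact ⟨⟨fun a b => commutative_of_cyclic_center_quotient f hker a b⟩⟩
      have hliftne : ∀ K : Subgroup (↥C ⧸ H'), Nat.card K = p → ¬ lift K ≤ H := by
        intro K hK hcon
        haveI : Nontrivial ↥K := by
          rw [← Finite.one_lt_card_iff_nontrivial, hK]
          exact hp.one_lt
        obtain ⟨x, hxne⟩ := exists_ne (1 : ↥K)
        obtain ⟨c, hc⟩ := QuotientGroup.mk'_surjective H' x.1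
        have hcK : c ∈ K.comap π := by show π c ∈ K; rw [hc]; exact x.2
        have hcH : (c : G) ∈ H := hcon (Subgroup.mem_map.mpr ⟨c, hcK, rfl⟩)
        have hc1 : π c = 1 := (QuotientGroup.eq_one_iff c).mpr (Subgroup.mem_subgroupOf.mpr hcH)
        rw [hc] at hc1
        exact hxne (Subtype.ext hc1)
      have hindexlt : ∀ K : Subgroup G, H ≤ K → ¬ K ≤ H → K.index ≤ n := by
        intro K hHK hKH
        have h1 := Subgroup.relIndex_mul_index hHK
        have h2 : H.relIndex K ≠ 1 := fun h => hKH (Subgroup.relIndex_eq_one.mp h)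
        have h3 : H.relIndex K ≠ 0 :=
          Subgroup.index_ne_zero_of_finite (H := H.subgroupOf K)
        have h4 : K.index ≠ 0 := Subgroup.index_ne_zero_of_finite
        have h5 : 2 ≤ H.relIndex K := by omega
        have h6 : 2 * K.index ≤ H.relIndex K * K.index := Nat.mul_le_mul_right K.index h5
        have h7 : H.index ≤ n + 1 := hle
        omega
      haveI : Fintype {A : Subgroup G // H ≤ A ∧ Maximal (fun B : Subgroup G => IsMulCommutative B) A} :=
        Fintype.ofFinite _
      haveI : Fintype {K : Subgroup (↥C ⧸ H') // Nat.card K = p} := Fintype.ofFinite _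
      have hfib1 : ∀ A : {A : Subgroup G // H ≤ A ∧ Maximal (fun B : Subgroup G => IsMulCommutative B) A},
          (Nat.card {K : {K : Subgroup (↥C ⧸ H') // Nat.card K = p} // K.1 ≤ qmap A.1} :
            ZMod p) = 1 := by
        rintro ⟨A, hHA, hAmax⟩
        have hAC : A ≤ C := hALEC A hAmax.1 hHA
        haveI : Nontrivial ↥(qmap A) := by
          have hAneH : ¬ A ≤ H := fun hAH => hmax ((le_antisymm hAH hHA) ▸ hAmax)
          obtain ⟨a, haA, haH⟩ := SetLike.not_le_iff_exists.mp hAneH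
          refine ⟨⟨⟨π ⟨a, hAC haA⟩,
            Subgroup.mem_map.mpr ⟨⟨a, hAC haA⟩, Subgroup.mem_subgroupOf.mpr haA, rfl⟩⟩, 1,
            fun hcon => ?_⟩⟩
          have hval : π ⟨a, hAC haA⟩ = 1 := Subtype.ext_iff.mp hcon
          exact haH (Subgroup.mem_subgroupOf.mp ((QuotientGroup.eq_one_iff _).mp hval))
        have hLA := count_orderP hp ↥(qmap A) (hQp.to_subgroup _)
        have eA : {K : {K : Subgroup (↥C ⧸ H') // Nat.card K = p} // K.1 ≤ qmap A} ≃
            {B : Subgroup ↥(qmap A) // Nat.card B = p} :=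
          Equiv.trans
            { toFun := fun s => (⟨s.1.1, s.1.2, s.2⟩ :
                {K : Subgroup (↥C ⧸ H') // Nat.card K = p ∧ K ≤ qmap A})
              invFun := fun s => ⟨⟨s.1, s.2.1⟩, s.2.2⟩
              left_inv := fun s => rfl
              right_inv := fun s => rfl }
            (subgroupsCardLeEquiv (qmap A) p)
        rw [Nat.card_congr eA]
        exact hLA
      have hfib2 : ∀ K : {K : Subgroup (↥C ⧸ H') // Nat.card K = p},
          (Nat.card {A : {A : Subgroup G // H ≤ A ∧ Maximal (fun B : Subgroup G => IsMulCommutative B) A} //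
            K.1 ≤ qmap A.1} : ZMod p) = 1 := by
        rintro ⟨K, hK⟩
        have hKcomm := hliftcomm K hK
        have hKne := hliftne K hK
        have hKH := hliftH K
        have eK : {A : {A : Subgroup G // H ≤ A ∧ Maximal (fun B : Subgroup G => IsMulCommutative B) A} //
            K ≤ qmap A.1} ≃
            {A : Subgroup G // lift K ≤ A ∧ Maximal (fun B : Subgroup G => IsMulCommutative B) A} :=
          { toFun := fun s => ⟨s.1.1,
              (hliftle K s.1.1 (hALEC s.1.1 s.1.2.2.1 s.1.2.1) s.1.2.1).mp s.2, s.1.2.2⟩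
            invFun := fun s => ⟨⟨s.1, hKH.trans s.2.1, s.2.2⟩,
              (hliftle K s.1 (hALEC s.1 s.2.2.1 (hKH.trans s.2.1)) (hKH.trans s.2.1)).mpr s.2.1⟩
            left_inv := fun s => rfl
            right_inv := fun s => rfl }
        rw [Nat.card_congr eK]
        exact IH (lift K) hKcomm (hindexlt (lift K) hKH hKne)
      haveI : ∀ A : {A : Subgroup G // H ≤ A ∧ Maximal (fun B : Subgroup G => IsMulCommutative B) A},
          Fintype {K : {K : Subgroup (↥C ⧸ H') // Nat.card K = p} // K.1 ≤ qmap A.1} :=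
        fun _ => Fintype.ofFinite _
      haveI : ∀ K : {K : Subgroup (↥C ⧸ H') // Nat.card K = p},
          Fintype {A : {A : Subgroup G // H ≤ A ∧ Maximal (fun B : Subgroup G => IsMulCommutative B) A} //
            K.1 ≤ qmap A.1} :=
        fun _ => Fintype.ofFinite _
      have e1 : {x : Subgroup G × Subgroup (↥C ⧸ H') //
            (H ≤ x.1 ∧ Maximal (fun B : Subgroup G => IsMulCommutative B) x.1) ∧ Nat.card x.2 = p ∧
              x.2 ≤ qmap x.1} ≃
          Σ A : {A : Subgroup G // H ≤ A ∧ Maximal (fun B : Subgroup G => IsMulCommutative B) A},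
            {K : {K : Subgroup (↥C ⧸ H') // Nat.card K = p} // K.1 ≤ qmap A.1} :=
        { toFun := fun s => ⟨⟨s.1.1, s.2.1⟩, ⟨⟨s.1.2, s.2.2.1⟩, s.2.2.2⟩⟩
          invFun := fun t => ⟨(t.1.1, t.2.1.1), ⟨t.1.2, t.2.1.2, t.2.2⟩⟩
          left_inv := fun s => rfl
          right_inv := fun t => rfl }
      have e2 : {x : Subgroup G × Subgroup (↥C ⧸ H') //
            (H ≤ x.1 ∧ Maximal (fun B : Subgroup G => IsMulCommutative B) x.1) ∧ Nat.card x.2 = p ∧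
              x.2 ≤ qmap x.1} ≃
          Σ K : {K : Subgroup (↥C ⧸ H') // Nat.card K = p},
            {A : {A : Subgroup G // H ≤ A ∧ Maximal (fun B : Subgroup G => IsMulCommutative B) A} //
              K.1 ≤ qmap A.1} :=
        { toFun := fun s => ⟨⟨s.1.2, s.2.2.1⟩, ⟨⟨s.1.1, s.2.1⟩, s.2.2.2⟩⟩
          invFun := fun t => ⟨(t.2.1.1, t.1.1), ⟨t.2.1.2, t.1.2, t.2.2⟩⟩
          left_inv := fun s => rfl
          right_inv := fun t => rfl }
      have h1 : (Nat.card {x : Subgroup G × Subgroup (↥C ⧸ H') //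
            (H ≤ x.1 ∧ Maximal (fun B : Subgroup G => IsMulCommutative B) x.1) ∧ Nat.card x.2 = p ∧
              x.2 ≤ qmap x.1} : ZMod p) =
          Nat.card {A : Subgroup G // H ≤ A ∧ Maximal (fun B : Subgroup G => IsMulCommutative B) A} := by
        rw [Nat.card_congr e1, Nat.card_eq_fintype_card, Fintype.card_sigma, Nat.cast_sum]
        calc (∑ A : {A : Subgroup G // H ≤ A ∧ Maximal (fun B : Subgroup G => IsMulCommutative B) A},
              (Fintype.card {K : {K : Subgroup (↥C ⧸ H') // Nat.card K = p} //
                K.1 ≤ qmap A.1} : ZMod p))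
            = ∑ A : {A : Subgroup G // H ≤ A ∧ Maximal (fun B : Subgroup G => IsMulCommutative B) A},
                (1 : ZMod p) := by
              refine Finset.sum_congr rfl fun A _ => ?_
              rw [← Nat.card_eq_fintype_card]
              exact hfib1 A
          _ = _ := by
              rw [Finset.sum_const, nsmul_eq_mul, mul_one, Finset.card_univ,
                Nat.card_eq_fintype_card]
      have h2 : (Nat.card {x : Subgroup G × Subgroup (↥C ⧸ H') //
            (H ≤ x.1 ∧ Maximal (fun B : Subgroup G => IsMulCommutative B) x.1) ∧ Nat.card x.2 = p ∧
              x.2 ≤ qmap x.1} : ZMod p) =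
          Nat.card {K : Subgroup (↥C ⧸ H') // Nat.card K = p} := by
        rw [Nat.card_congr e2, Nat.card_eq_fintype_card, Fintype.card_sigma, Nat.cast_sum]
        calc (∑ K : {K : Subgroup (↥C ⧸ H') // Nat.card K = p},
              (Fintype.card {A : {A : Subgroup G // H ≤ A ∧ Maximal (fun B : Subgroup G => IsMulCommutative B) A} //
                K.1 ≤ qmap A.1} : ZMod p))
            = ∑ K : {K : Subgroup (↥C ⧸ H') // Nat.card K = p}, (1 : ZMod p) := by
              refine Finset.sum_congr rfl fun K _ => ?_
              rw [← Nat.card_eq_fintype_card]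
              exact hfib2 K
          _ = _ := by
              rw [Finset.sum_const, nsmul_eq_mul, mul_one, Finset.card_univ,
                Nat.card_eq_fintype_card]
      have hT1 : (Nat.card {K : Subgroup (↥C ⧸ H') // Nat.card K = p} : ZMod p) = 1 :=
        count_orderP hp _ hQp
      rw [← h1, h2]
      exact hT1

theorem maximal_abelian_over_count_facts {p : ℕ} (hp : p.Prime) {G : Type*} [Group G]
    [Finite G] (hG : IsPGroup p G) (H : Subgroup G) (hH : IsMulCommutative H) :
    Nat.card {A : Subgroup G // H ≤ A ∧ Maximal (fun B : Subgroup G => IsMulCommutative B) A} % p = 1 ∧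
    Nat.card {A : Subgroup G // H ≤ A ∧ Maximal (fun B : Subgroup G => IsMulCommutative B) A} ≠ 0 ∧
    (∃ A : Subgroup G, H ≤ A ∧ Maximal (fun B : Subgroup G => IsMulCommutative B) A) ∧
    ((∃! A : Subgroup G, H ≤ A ∧ Maximal (fun B : Subgroup G => IsMulCommutative B) A) →
      Nat.card {A : Subgroup G // H ≤ A ∧ Maximal (fun B : Subgroup G => IsMulCommutative B) A} = 1) := by
  have hmain := main_count hp hG H.index H hH le_rfl
  have hmod : Nat.card {A : Subgroup G // H ≤ A ∧ Maximal (fun B : Subgroup G => IsMulCommutative B) A} % p = 1 := by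
    have h := (ZMod.natCast_eq_natCast_iff' _ 1 p).mp (by rw [hmain, Nat.cast_one])
    rwa [Nat.mod_eq_of_lt hp.one_lt] at h
  have hne : Nat.card {A : Subgroup G // H ≤ A ∧ Maximal (fun B : Subgroup G => IsMulCommutative B) A} ≠ 0 := by
    intro h
    rw [h, Nat.zero_mod] at hmod
    exact one_ne_zero hmod.symm
  have hex : ∃ A : Subgroup G, H ≤ A ∧ Maximal (fun B : Subgroup G => IsMulCommutative B) A := by
    obtain ⟨⟨A, hA⟩⟩ := (Nat.card_ne_zero.mp hne).1
    exact ⟨A, hA⟩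
  refine ⟨hmod, hne, hex, ?_⟩
  rintro ⟨A, hA, huniq⟩
  rw [Nat.card_eq_one_iff_exists]
  exact ⟨⟨A, hA⟩, fun y => Subtype.ext ((huniq y.1 y.2).trans rfl)⟩
end

section
/- Let G be a finite p-group with center Z, and suppose G is non-abelian. Then the number of maximal abelian subgroups of G is congruent modulo p to the number of subgroups of order p in the quotient group G/Z. -/
open Subgroup MulAction Pointwise

namespace MaxAbCountAux

universe u


lemma sum_modEq_card {α : Type*} {p : ℕ} (s : Finset α) (f : α → ℕ)
    (hf : ∀ a ∈ s, f a ≡ 1 [MOD p]) : ∑ a ∈ s, f a ≡ s.card [MOD p] := by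
  classical
  induction s using Finset.induction_on with
  | empty => simp [Nat.ModEq.refl]
  | insert a s h ih =>
    rw [Finset.sum_insert h, Finset.card_insert_of_notMem h]
    have := Nat.ModEq.add (hf a (Finset.mem_insert_self _ _))
      (ih fun b hb => hf b (Finset.mem_insert_of_mem hb))
    rwa [Nat.add_comm 1 _] at this

lemma card_map_subtype {G : Type*} [Group G] (H : Subgroup G) (K : Subgroup H) :
    Nat.card (K.map H.subtype) = Nat.card K :=
  (Nat.card_congr (K.equivMapOfInjective H.subtype H.subtype_injective).toEquiv).symm

lemma card_subgroupOf {G : Type*} [Group G] {H K : Subgroup G} (h : K ≤ H) :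
    Nat.card (K.subgroupOf H) = Nat.card K := by
  rw [← card_map_subtype H (K.subgroupOf H), subgroupOf_map_subtype, inf_eq_left.mpr h]

/-- Subgroups of `G` of order `p` contained in `H` correspond to subgroups of `H` of order `p`. -/
noncomputable def equivCardP {G : Type*} [Group G] (p : ℕ) (H : Subgroup G) :
    {K : Subgroup G // Nat.card K = p ∧ K ≤ H} ≃ {K' : Subgroup H // Nat.card K' = p} where
  toFun K := ⟨K.1.subgroupOf H, by rw [card_subgroupOf K.2.2]; exact K.2.1⟩
  invFun K' := ⟨K'.1.map H.subtype, by rw [card_map_subtype]; exact K'.2, map_subtype_le K'.1⟩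
  left_inv K := Subtype.ext (by
    show ((K : Subgroup G).subgroupOf H).map H.subtype = K
    rw [subgroupOf_map_subtype, inf_eq_left.mpr K.2.2])
  right_inv K' := Subtype.ext (comap_map_eq_self_of_injective H.subtype_injective K'.1)



/-- A normal subgroup of order `p` in a finite `p`-group is central. -/
lemma normal_le_center {p : ℕ} (hp : p.Prime) {G : Type*} [Group G] [Finite G]
    (hG : IsPGroup p G) (K : Subgroup G) (hKn : K.Normal) (hK : Nat.card K = p) :
    K ≤ center G := by
  haveI := hKn
  haveI : Fact p.Prime := ⟨hp⟩
  have hPC : IsPGroup p (ConjAct G) := hG.of_equiv ConjAct.toConjAct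
  have hmod : Nat.card K ≡ Nat.card (fixedPoints (ConjAct G) K) [MOD p] :=
    hPC.card_modEq_card_fixedPoints K
  have h1 : (1 : K) ∈ fixedPoints (ConjAct G) K := fun g => by
    ext
    simp [ConjAct.Subgroup.val_conj_smul]
  have hfin : (fixedPoints (ConjAct G) K).Finite := Set.toFinite _
  have hle : Nat.card (fixedPoints (ConjAct G) K) ≤ Nat.card K := by
    have : (fixedPoints (ConjAct G) K).ncard ≤ (Set.univ : Set K).ncard :=
      Set.ncard_le_ncard (Set.subset_univ _) (Set.toFinite _)
    rwa [Set.ncard_univ, ← Nat.card_coe_set_eq] at this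
  have hpos : 0 < Nat.card (fixedPoints (ConjAct G) K) := by
    have : Nonempty (fixedPoints (ConjAct G) K) := ⟨⟨1, h1⟩⟩
    exact Nat.card_pos
  have hdvd : p ∣ Nat.card (fixedPoints (ConjAct G) K) := by
    have : Nat.card (fixedPoints (ConjAct G) K) ≡ 0 [MOD p] := by
      calc Nat.card (fixedPoints (ConjAct G) K) ≡ Nat.card K [MOD p] := hmod.symm
        _ = p := hK
        _ ≡ 0 [MOD p] := (Nat.modEq_zero_iff_dvd).mpr dvd_rfl
    exact (Nat.modEq_zero_iff_dvd).mp this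
  have hcard : Nat.card (fixedPoints (ConjAct G) K) = Nat.card K := by
    have := Nat.le_of_dvd hpos hdvd
    omega
  have huniv : fixedPoints (ConjAct G) K = Set.univ := by
    apply Set.eq_of_subset_of_ncard_le (Set.subset_univ _)
    rw [Set.ncard_univ, ← Nat.card_coe_set_eq, hcard]
  intro k hk
  rw [Subgroup.mem_center_iff]
  intro g
  have hfix : (⟨k, hk⟩ : K) ∈ fixedPoints (ConjAct G) K := huniv ▸ Set.mem_univ _
  have := hfix (ConjAct.toConjAct g)
  have hval : g * k * g⁻¹ = k := by
    have := congrArg Subtype.val this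
    rwa [ConjAct.Subgroup.val_conj_smul, ConjAct.smul_def, ConjAct.ofConjAct_toConjAct] at this
  calc g * k = (g * k * g⁻¹) * g := by group
    _ = k * g := by rw [hval]



lemma card_pow_eq {p : ℕ} (hp : p.Prime) (H : Type*) [Group H] [Finite H] :
    Nat.card {K : Subgroup H // Nat.card K = p} * (p - 1) + 1
      = Nat.card {x : H // x ^ p = 1} := by
  classical
  haveI : Fintype H := Fintype.ofFinite H
  haveI : Finite (Subgroup H) := Finite.of_injective _ SetLike.coe_injective
  haveI : Fintype (Subgroup H) := Fintype.ofFinite _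
  set E : Finset H := Finset.univ.filter fun x => orderOf x = p with hE
  set S : Finset (Subgroup H) := Finset.univ.filter fun K => Nat.card K = p with hS
  have hfib : ∀ K ∈ S, (E.filter fun x => zpowers x = K).card = p - 1 := by
    intro K hK
    have hKp : Nat.card K = p := by simpa [hS] using (Finset.mem_filter.mp hK).2
    have : (E.filter fun x => zpowers x = K) = (Finset.univ.filter (· ∈ K)).erase 1 := by
      ext x
      simp only [Finset.mem_filter, Finset.mem_erase, Finset.mem_univ, true_and, hE]
      constructor
      · rintro ⟨hord, hz⟩
        refine ⟨fun h1 => ?_, hz ▸ mem_zpowers x⟩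
        rw [h1, orderOf_one] at hord
        exact hp.one_lt.ne' hord.symm  -- hord : 1 = p
      · rintro ⟨h1, hx⟩
        have hdvd : orderOf x ∣ p := hKp ▸ Subgroup.orderOf_dvd_natCard K hx
        have hord : orderOf x = p := by
          rcases (Nat.dvd_prime hp).mp hdvd with h | h
          · exact absurd (orderOf_eq_one_iff.mp h) h1
          · exact h
        refine ⟨hord, ?_⟩
        apply Subgroup.eq_of_le_of_card_ge (zpowers_le.mpr hx)
        rw [hKp, Nat.card_zpowers, hord]
    rw [this, Finset.card_erase_of_mem (by simp [K.one_mem]),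
      ← Fintype.card_subtype, ← Nat.card_eq_fintype_card]
    have : Nat.card {x : H // x ∈ K} = Nat.card K := rfl
    rw [this, hKp]
  have hEcard : E.card = S.card * (p - 1) := by
    rw [Finset.card_eq_sum_card_fiberwise (f := fun x => zpowers x) (t := S)
      (fun x hx => by
        simp only [hE, Finset.mem_coe, Finset.mem_filter, Finset.mem_univ, true_and] at hx
        simp only [hS, Finset.mem_coe, Finset.mem_filter, Finset.mem_univ, true_and, Nat.card_zpowers, hx])]
    rw [Finset.sum_congr rfl hfib, Finset.sum_const, smul_eq_mul]
  have hins : (Finset.univ.filter fun x : H => x ^ p = 1) = insert 1 E := by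
    ext x
    simp only [Finset.mem_filter, Finset.mem_univ, true_and, Finset.mem_insert, hE]
    constructor
    · intro hx
      rcases (Nat.dvd_prime hp).mp (orderOf_dvd_of_pow_eq_one hx) with h | h
      · exact Or.inl (orderOf_eq_one_iff.mp h)
      · exact Or.inr h
    · rintro (rfl | h)
      · exact one_pow p
      · rw [← h]; exact pow_orderOf_eq_one x
  have h1E : (1 : H) ∉ E := by
    simp only [hE, Finset.mem_filter, Finset.mem_univ, true_and, orderOf_one]
    exact fun h => hp.one_lt.ne' h.symm
  have : Nat.card {x : H // x ^ p = 1} = E.card + 1 := by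
    rw [Nat.card_eq_fintype_card, Fintype.card_subtype, hins,
      Finset.card_insert_of_notMem h1E, Nat.add_comm]
  rw [this, hEcard]
  congr 1
  rw [Nat.card_eq_fintype_card, Fintype.card_subtype]



lemma modeq_one_aux {p N M : ℕ} (hp : p.Prime) (h : N * (p - 1) + 1 = M) (hd : p ∣ M) :
    N ≡ 1 [MOD p] := by
  haveI : NeZero p := ⟨hp.ne_zero⟩
  have hcast : ((N * (p - 1) + 1 : ℕ) : ZMod p) = ((M : ℕ) : ZMod p) := by rw [h]
  have hM0 : ((M : ℕ) : ZMod p) = 0 := (ZMod.natCast_eq_zero_iff M p).mpr hd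
  rw [hM0] at hcast
  push_cast [Nat.cast_sub hp.one_le] at hcast
  rw [ZMod.natCast_self] at hcast
  have : (N : ZMod p) = ((1 : ℕ) : ZMod p) := by push_cast; linear_combination -hcast
  exact (ZMod.natCast_eq_natCast_iff _ _ _).mp this


/-- The number of subgroups of order `p` in a nontrivial finite `p`-group is `≡ 1 mod p`. -/
lemma card_orderp_modEq_one {p : ℕ} (hp : p.Prime) (H : Type*) [Group H] [Finite H]
    [Nontrivial H] (hH : IsPGroup p H) :
    Nat.card {K : Subgroup H // Nat.card K = p} ≡ 1 [MOD p] := by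
  classical
  haveI : Fact p.Prime := ⟨hp⟩
  letI : SMul (ConjAct H) {K : Subgroup H // Nat.card K = p} :=
    ⟨fun g K => ⟨g • K.1, by
      exact ((Nat.card_congr (Subgroup.equivSMul g K.1).toEquiv).symm).trans K.2⟩⟩
  letI : MulAction (ConjAct H) {K : Subgroup H // Nat.card K = p} :=
    { one_smul := fun K => Subtype.ext (one_smul _ K.1)
      mul_smul := fun g h K => Subtype.ext (mul_smul g h K.1) }
  have hmod : Nat.card {K : Subgroup H // Nat.card K = p}
      ≡ Nat.card (fixedPoints (ConjAct H) {K : Subgroup H // Nat.card K = p}) [MOD p] :=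
    (hH.of_equiv ConjAct.toConjAct).card_modEq_card_fixedPoints _
  -- fixed points are exactly order-p subgroups of the center
  have hfix : ∀ K : {K : Subgroup H // Nat.card K = p},
      K ∈ fixedPoints (ConjAct H) {K : Subgroup H // Nat.card K = p} ↔ K.1 ≤ center H := by
    intro K
    constructor
    · intro hKf
      have hnorm : K.1.Normal := by
        constructor
        intro n hn g
        have h1 : ConjAct.toConjAct g • K.1 = K.1 :=
          congrArg Subtype.val (hKf (ConjAct.toConjAct g))
        rw [← h1]
        rw [Subgroup.mem_smul_pointwise_iff_exists]
        exact ⟨n, hn, ConjAct.toConjAct_smul g n⟩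
      exact normal_le_center hp hH K.1 hnorm K.2
    · intro hle g
      have hnorm : K.1.Normal := by
        constructor
        intro n hn g'
        have := Subgroup.mem_center_iff.mp (hle hn) g'
        have : g' * n * g'⁻¹ = n := by rw [this]; group
        rw [this]; exact hn
      exact Subtype.ext (hnorm.conjAct g)
  have e1 : fixedPoints (ConjAct H) {K : Subgroup H // Nat.card K = p}
      ≃ {K : Subgroup H // Nat.card K = p ∧ K ≤ center H} :=
    { toFun := fun F => ⟨F.1.1, F.1.2, (hfix F.1).mp F.2⟩
      invFun := fun K => ⟨⟨K.1, K.2.1⟩, (hfix ⟨K.1, K.2.1⟩).mpr K.2.2⟩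
      left_inv := fun F => Subtype.ext (Subtype.ext rfl)
      right_inv := fun K => Subtype.ext rfl }
  have e2 : {K : Subgroup H // Nat.card K = p ∧ K ≤ center H}
      ≃ {K' : Subgroup (center H) // Nat.card K' = p} := equivCardP p (center H)
  -- now count order-p subgroups of the center
  haveI hZnt : Nontrivial (center H) := hH.center_nontrivial
  have hZp : IsPGroup p (center H) := hH.to_subgroup (center H)
  letI : CommGroup (center H) := { (center H).toGroup with mul_comm := fun a b => mul_comm' a b }
  set Ω : Subgroup (center H) := (powMonoidHom p : center H →* center H).ker with hΩ
  have eΩ : {x : center H // x ^ p = 1} ≃ Ω :=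
    Equiv.subtypeEquivRight fun x => by
      simp [hΩ, MonoidHom.mem_ker, powMonoidHom_apply]
  have hΩnt : Nontrivial Ω := by
    obtain ⟨n, hn, hcard⟩ := (IsPGroup.nontrivial_iff_card hZp).mp hZnt
    obtain ⟨x, hx⟩ := exists_prime_orderOf_dvd_card' p
      (hcard ▸ dvd_pow_self p hn.ne')
    have hxΩ : x ∈ Ω := by
      simp [hΩ, MonoidHom.mem_ker, powMonoidHom_apply, ← hx, pow_orderOf_eq_one]
    refine ⟨⟨x, hxΩ⟩, 1, fun hc => ?_⟩
    have : x = 1 := congrArg Subtype.val hc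
    rw [this, orderOf_one] at hx
    exact hp.one_lt.ne' hx.symm
  have hΩdvd : p ∣ Nat.card Ω := by
    obtain ⟨n, hn, hcard⟩ := (IsPGroup.nontrivial_iff_card (hZp.to_subgroup Ω)).mp hΩnt
    exact hcard ▸ dvd_pow_self p hn.ne'
  have harith : Nat.card {K' : Subgroup (center H) // Nat.card K' = p} ≡ 1 [MOD p] := by
    refine modeq_one_aux hp (card_pow_eq hp (center H)) ?_
    rwa [Nat.card_congr eΩ]
  calc Nat.card {K : Subgroup H // Nat.card K = p}
      ≡ Nat.card (fixedPoints (ConjAct H) {K : Subgroup H // Nat.card K = p}) [MOD p] := hmod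
    _ = Nat.card {K' : Subgroup (center H) // Nat.card K' = p} := Nat.card_congr (e1.trans e2)
    _ ≡ 1 [MOD p] := harith



lemma center_le_of_maximalComm {G : Type*} [Group G] {A : Subgroup G}
    (hA : Maximal (fun H : Subgroup G => IsMulCommutative H) A) : center G ≤ A := by
  haveI := hA.1
  have hcomm : IsMulCommutative ↥(A ⊔ center G) := by
    rw [← Subgroup.le_centralizer_iff_isMulCommutative]
    refine sup_le ?_ (Subgroup.center_le_centralizer _)
    rw [Subgroup.le_centralizer_iff]
    exact sup_le (Subgroup.le_centralizer A) (Subgroup.center_le_centralizer _)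
  exact le_sup_right.trans (hA.2 hcomm le_sup_left)

lemma not_le_center_of_maximalComm {G : Type*} [Group G] (hna : ¬ ∀ a b : G, a * b = b * a)
    {A : Subgroup G} (hA : Maximal (fun H : Subgroup G => IsMulCommutative H) A) : ¬ A ≤ center G := by
  intro hle
  apply hna
  have hall : ∀ x : G, x ∈ A := by
    intro x
    have hcomm : IsMulCommutative ↥(center G ⊔ zpowers x) := by
      rw [← Subgroup.le_centralizer_iff_isMulCommutative]
      refine sup_le (Subgroup.center_le_centralizer _) ?_
      rw [Subgroup.le_centralizer_iff]
      exact sup_le (Subgroup.center_le_centralizer _) (Subgroup.le_centralizer _)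
    have h2 := hA.2 hcomm (hle.trans le_sup_left)
    exact (le_sup_right.trans h2) (mem_zpowers x)
  haveI := hA.1
  exact fun a b => mul_comm_of_mem_isMulCommutative (H := A) (hall a) (hall b)





lemma maxComm_modEq_one : ∀ n : ℕ, ∀ p : ℕ, p.Prime → ∀ (G : Type u) (_ : Group G) (_ : Finite G),
    Nat.card G ≤ n → IsPGroup p G → (¬ ∀ a b : G, a * b = b * a) →
    Nat.card {A : Subgroup G // Maximal (fun H : Subgroup G => IsMulCommutative H) A} ≡ 1 [MOD p] := by
  intro n
  induction n with
  | zero =>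
    intro p hp G _ _ hcard _ _
    have : 0 < Nat.card G := Nat.card_pos
    omega
  | succ n ih =>
    intro p hp G _ _ hcard hG hna
    classical
    haveI : Fact p.Prime := ⟨hp⟩
    haveI : Fintype G := Fintype.ofFinite G
    haveI : Finite (Subgroup G) := Finite.of_injective _ SetLike.coe_injective
    haveI : Fintype (Subgroup G) := Fintype.ofFinite _
    haveI : Finite (G ⧸ center G) := Quotient.finite _
    haveI : Finite (Subgroup (G ⧸ center G)) := Finite.of_injective _ SetLike.coe_injective
    haveI : Fintype (Subgroup (G ⧸ center G)) := Fintype.ofFinite _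
    haveI : Nontrivial (G ⧸ center G) := by
      by_contra h
      rw [not_nontrivial_iff_subsingleton] at h
      apply hna
      intro a b
      have hx : ∀ x : G, x ∈ center G := fun x =>
        (QuotientGroup.eq_one_iff x).mp (Subsingleton.elim _ _)
      exact (Subgroup.mem_center_iff.mp (hx b) a)
    set mk := QuotientGroup.mk' (center G) with hmk
    set Amax : Finset (Subgroup G) :=
      Finset.univ.filter (fun A => Maximal (fun H : Subgroup G => IsMulCommutative H) A) with hAmax
    set Ks : Finset (Subgroup (G ⧸ center G)) :=
      Finset.univ.filter (fun K => Nat.card K = p) with hKs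
    have hmemA : ∀ A, A ∈ Amax ↔ Maximal (fun H : Subgroup G => IsMulCommutative H) A := by
      intro A; simp [hAmax]
    have hmemK : ∀ K, K ∈ Ks ↔ Nat.card K = p := by intro K; simp [hKs]
    have hswap : ∑ A ∈ Amax, (Ks.filter fun K => K ≤ A.map mk).card
        = ∑ K ∈ Ks, (Amax.filter fun A => K ≤ A.map mk).card := by
      simp_rw [Finset.card_filter]
      exact Finset.sum_comm
    -- inner count 1
    have hin1 : ∀ A ∈ Amax, (Ks.filter fun K => K ≤ A.map mk).card ≡ 1 [MOD p] := by
      intro A hA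
      rw [hmemA] at hA
      haveI := hA.1
      have hnb : A.map mk ≠ ⊥ := by
        rw [Ne, Subgroup.map_eq_bot_iff, QuotientGroup.ker_mk']
        exact not_le_center_of_maximalComm hna hA
      haveI : Nontrivial (A.map mk) := (Subgroup.nontrivial_iff_ne_bot _).mpr hnb
      have hcount : (Ks.filter fun K => K ≤ A.map mk).card
          = Nat.card {K : Subgroup (G ⧸ center G) // Nat.card K = p ∧ K ≤ A.map mk} := by
        rw [Nat.card_eq_fintype_card, Fintype.card_subtype, hKs, Finset.filter_filter]
      rw [hcount, Nat.card_congr (equivCardP p (A.map mk))]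
      exact card_orderp_modEq_one hp _ ((hG.to_quotient (center G)).to_subgroup (A.map mk))
    -- inner count 2
    have hin2 : ∀ K ∈ Ks, (Amax.filter fun A => K ≤ A.map mk).card ≡ 1 [MOD p] := by
      intro K hK
      rw [hmemK] at hK
      set T : Subgroup G := K.comap mk with hT
      have hTmap : T.map mk = K :=
        Subgroup.map_comap_eq_self_of_surjective (QuotientGroup.mk'_surjective _) K
      haveI : IsCyclic K := isCyclic_of_prime_card hK
      have hTcomm : IsMulCommutative ↥T := by
        let f : ↥T →* ↥K := (mk.comp T.subtype).codRestrict K (fun t => t.2)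
        have hker : f.ker ≤ center ↥T := by
          intro t ht
          rw [MonoidHom.mem_ker] at ht
          have h1 : (↑t : G) ∈ center G := by
            have h2 : mk (↑t : G) = 1 := congrArg Subtype.val ht
            rwa [QuotientGroup.mk'_apply, QuotientGroup.eq_one_iff] at h2
          rw [Subgroup.mem_center_iff]
          intro s
          exact Subtype.ext (Subgroup.mem_center_iff.mp h1 ↑s)
        exact ⟨⟨fun a b => commutative_of_cyclic_center_quotient f hker a b⟩⟩
      haveI := hTcomm
      have hTne : ¬ T ≤ center G := by
        intro h
        have hKbot : K = ⊥ := by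
          rw [← hTmap, Subgroup.map_eq_bot_iff, QuotientGroup.ker_mk']
          exact h
        rw [hKbot, Subgroup.card_bot] at hK
        exact hp.one_lt.ne' hK.symm
      have hcond : ∀ A : Subgroup G, Maximal (fun H : Subgroup G => IsMulCommutative H) A →
          (K ≤ A.map mk ↔ T ≤ A) := by
        intro A hA
        constructor
        · intro h
          have h2 := Subgroup.comap_mono (f := mk) h
          rwa [Subgroup.comap_map_eq, QuotientGroup.ker_mk',
            sup_eq_left.mpr (center_le_of_maximalComm hA), ← hT] at h2
        · intro h
          rw [← hTmap]
          exact Subgroup.map_mono h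
      have hfilter : (Amax.filter fun A => K ≤ A.map mk) = (Amax.filter fun A => T ≤ A) :=
        Finset.filter_congr (fun A hA => by
          rw [hmemA] at hA
          exact hcond A hA)
      rw [hfilter]
      set C := Subgroup.centralizer (T : Set G) with hC
      have hTC : T ≤ C := Subgroup.le_centralizer T
      have hAC : ∀ A : Subgroup G, IsMulCommutative ↥A → T ≤ A → A ≤ C := by
        intro A hAc hTA
        haveI := hAc
        exact (Subgroup.le_centralizer A).trans
          (Subgroup.centralizer_le (SetLike.coe_subset_coe.mpr hTA))
      by_cases hCcomm : IsMulCommutative ↥C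
      · have hCmax : Maximal (fun H : Subgroup G => IsMulCommutative H) C :=
          ⟨hCcomm, fun B hB hCB => hAC B hB (hTC.trans hCB)⟩
        have hsing : (Amax.filter fun A => T ≤ A) = {C} := by
          apply Finset.eq_singleton_iff_unique_mem.mpr
          constructor
          · exact Finset.mem_filter.mpr ⟨(hmemA C).mpr hCmax, hTC⟩
          · intro A hA
            obtain ⟨hA1, hTA⟩ := Finset.mem_filter.mp hA
            rw [hmemA] at hA1
            have hac := hAC A hA1.1 hTA
            exact le_antisymm hac (hA1.2 hCcomm hac)
        rw [hsing, Finset.card_singleton]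
      · have hCne : C ≠ ⊤ := by
          obtain ⟨t, ht, htZ⟩ : ∃ t ∈ T, t ∉ center G := by
            by_contra hcon
            push_neg at hcon
            exact hTne hcon
          intro htop
          apply htZ
          rw [Subgroup.mem_center_iff]
          intro g
          have hg : g ∈ C := htop ▸ Subgroup.mem_top g
          exact (Subgroup.mem_centralizer_iff.mp hg t ht).symm
        have hcardC : Nat.card ↥C ≤ n := by
          have hlt : Nat.card ↥C < Nat.card G := by
            have h1 : (C : Set G) ⊂ Set.univ := by
              rw [Set.ssubset_univ_iff]
              intro h
              exact hCne (SetLike.coe_injective (by rw [h, Subgroup.coe_top]))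
            have h2 := Set.ncard_lt_ncard h1 Set.finite_univ
            rwa [Set.ncard_univ, ← Nat.card_coe_set_eq] at h2
          omega
        have hCna : ¬ ∀ a b : ↥C, a * b = b * a := fun h => hCcomm ⟨⟨fun a b => h a b⟩⟩
        have hIH := ih p hp ↥C inferInstance inferInstance hcardC (hG.to_subgroup C) hCna
        have hWD1 : ∀ A : Subgroup G, Maximal (fun H : Subgroup G => IsMulCommutative H) A → T ≤ A →
            Maximal (fun H : Subgroup ↥C => IsMulCommutative H) (A.subgroupOf C) := by
          intro A hA hTA
          haveI := hA.1
          have hACle := hAC A hA.1 hTA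
          constructor
          · exact inferInstance
          · intro B' hB' hle
            haveI := hB'
            have hBA : A ≤ B'.map C.subtype := by
              have hh : (A.subgroupOf C).map C.subtype = A := by
                rw [subgroupOf_map_subtype, inf_eq_left.mpr hACle]
              rw [← hh]
              exact Subgroup.map_mono hle
            have hmap : B'.map C.subtype ≤ A := hA.2 inferInstance hBA
            have h4 : Subgroup.comap C.subtype (Subgroup.map C.subtype B') = B' :=
              Subgroup.comap_map_eq_self_of_injective C.subtype_injective B'
            have h5 : B' ≤ Subgroup.comap C.subtype A := h4 ▸ Subgroup.comap_mono hmap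
            exact h5
        have hWD2 : ∀ B : Subgroup ↥C, Maximal (fun H : Subgroup ↥C => IsMulCommutative H) B →
            Maximal (fun H : Subgroup G => IsMulCommutative H) (B.map C.subtype) ∧ T ≤ B.map C.subtype := by
          intro B hB
          haveI := hB.1
          have hTB : T ≤ B.map C.subtype := by
            have hTsub : T.subgroupOf C ≤ center ↥C := by
              intro t ht
              rw [Subgroup.mem_center_iff]
              intro c
              have htT : (↑t : G) ∈ T := ht
              exact Subtype.ext ((Subgroup.mem_centralizer_iff.mp c.2 _ htT).symm)
            have h1 : T.subgroupOf C ≤ B := hTsub.trans (center_le_of_maximalComm hB)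
            have h2 : (T.subgroupOf C).map C.subtype = T := by
              rw [subgroupOf_map_subtype, inf_eq_left.mpr hTC]
            rw [← h2]
            exact Subgroup.map_mono h1
          refine ⟨⟨inferInstance, ?_⟩, hTB⟩
          intro D hD hle
          haveI := hD
          have hDC : D ≤ C := hAC D hD (hTB.trans hle)
          have hB' : B ≤ D.subgroupOf C := by
            have h4 : Subgroup.comap C.subtype (Subgroup.map C.subtype B) = B :=
              Subgroup.comap_map_eq_self_of_injective C.subtype_injective B
            have h5 := h4 ▸ Subgroup.comap_mono hle
            exact h5
          have h6 := hB.2 inferInstance hB'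
          have h3 : (D.subgroupOf C).map C.subtype = D := by
            rw [subgroupOf_map_subtype, inf_eq_left.mpr hDC]
          rw [← h3]
          exact Subgroup.map_mono h6
        have e : {A : Subgroup G // Maximal (fun H : Subgroup G => IsMulCommutative H) A ∧ T ≤ A}
            ≃ {B : Subgroup ↥C // Maximal (fun H : Subgroup ↥C => IsMulCommutative H) B} :=
          { toFun := fun A => ⟨A.1.subgroupOf C, hWD1 A.1 A.2.1 A.2.2⟩
            invFun := fun B => ⟨B.1.map C.subtype, (hWD2 B.1 B.2).1, (hWD2 B.1 B.2).2⟩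
            left_inv := fun A => Subtype.ext (by
              show (A.1.subgroupOf C).map C.subtype = A.1
              rw [subgroupOf_map_subtype, inf_eq_left.mpr (hAC A.1 A.2.1.1 A.2.2)])
            right_inv := fun B => Subtype.ext
              (Subgroup.comap_map_eq_self_of_injective C.subtype_injective B.1) }
        have hcnt : (Amax.filter fun A => T ≤ A).card
            = Nat.card {A : Subgroup G // Maximal (fun H : Subgroup G => IsMulCommutative H) A ∧ T ≤ A} := by
          rw [Nat.card_eq_fintype_card, Fintype.card_subtype, hAmax, Finset.filter_filter]
        rw [hcnt, Nat.card_congr e]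
        exact hIH
    -- assemble
    have hA1 : Nat.card {A : Subgroup G // Maximal (fun H : Subgroup G => IsMulCommutative H) A} = Amax.card := by
      rw [Nat.card_eq_fintype_card, Fintype.card_subtype, hAmax]
    have hK1 : Nat.card {K : Subgroup (G ⧸ center G) // Nat.card K = p} = Ks.card := by
      rw [Nat.card_eq_fintype_card, Fintype.card_subtype, hKs]
    rw [hA1]
    calc Amax.card ≡ ∑ A ∈ Amax, (Ks.filter fun K => K ≤ A.map mk).card [MOD p] :=
          (sum_modEq_card _ _ hin1).symm
      _ = ∑ K ∈ Ks, (Amax.filter fun A => K ≤ A.map mk).card := hswap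
      _ ≡ Ks.card [MOD p] := sum_modEq_card _ _ hin2
      _ = Nat.card {K : Subgroup (G ⧸ center G) // Nat.card K = p} := hK1.symm
      _ ≡ 1 [MOD p] := card_orderp_modEq_one hp _ (hG.to_quotient (center G))


end MaxAbCountAux

theorem maximal_abelian_count_congr_order_p_in_central_quotient {p : ℕ} (hp : p.Prime)
    {G : Type*} [Group G] [Finite G] (hG : IsPGroup p G)
    (h : ¬ ∀ a b : G, a * b = b * a) :
    Nat.card {A : Subgroup G // Maximal (fun H : Subgroup G => IsMulCommutative H) A} ≡
      Nat.card {K : Subgroup (G ⧸ Subgroup.center G) // Nat.card K = p} [MOD p] := by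
  haveI : Finite (G ⧸ Subgroup.center G) := Quotient.finite _
  haveI : Nontrivial (G ⧸ Subgroup.center G) := by
    by_contra hcon
    rw [not_nontrivial_iff_subsingleton] at hcon
    exact h fun a b => Subgroup.mem_center_iff.mp
      ((QuotientGroup.eq_one_iff b).mp (Subsingleton.elim _ _)) a
  have h1 := MaxAbCountAux.maxComm_modEq_one (Nat.card G) p hp G inferInstance inferInstance
    le_rfl hG h
  have h2 := MaxAbCountAux.card_orderp_modEq_one hp (G ⧸ Subgroup.center G)
    (hG.to_quotient (Subgroup.center G))
  exact h1.trans h2.symm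
end
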